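/- arXiv:math/0512317 — 7 statements merged into one kernel-verified Lean document; each statement's English description precedes it below -/
import Mathlib

section
/- Let m > 1 be an integer and let 0 < ε < 1/m. Then there exists a natural number N such that for every complex number z satisfying ε ≤ |z - 1| ≤ 1/m, there exists a natural number k with 1 ≤ k ≤ N such that |z^k - 1| > 1/m. -/
theorem stmt_0 (m : ℤ) (hm : 1 < m) (ε : ℝ) (hε : 0 < ε) (hεm : ε < 1 / (m : ℝ)) :
    ∃ N : ℕ, ∀ z : ℂ, ε ≤ ‖z - 1‖ → ‖z - 1‖ ≤ 1 / (m : ℝ) →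
      ∃ k : ℕ, 1 ≤ k ∧ k ≤ N ∧ 1 / (m : ℝ) < ‖z ^ k - 1‖ := by
  have hm1 : (1:ℝ) < (m:ℝ) := by exact_mod_cast hm
  have hm0 : (0:ℝ) < (m:ℝ) := by linarith
  set N : ℕ := ⌈1 / (ε * ((m:ℝ) - 1))⌉₊ + 1 with hNdef
  refine ⟨N, fun z hεz hzm => ?_⟩
  by_contra h
  push_neg at h
  have hz1 : z ≠ 1 := by
    intro hz
    rw [hz] at hεz
    simp at hεz
    linarith
  have hre : ∀ k ∈ Finset.range N, 1 - 1/(m:ℝ) ≤ (z ^ k).re := by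
    intro k hk
    rcases Nat.eq_zero_or_pos k with hk0 | hk1
    · simp [hk0]
      positivity
    · have hk' := h k hk1 (le_of_lt (Finset.mem_range.mp hk))
      have h2 : (1 : ℝ) - (z ^ k).re ≤ ‖z ^ k - 1‖ := by
        have h3 := Complex.re_le_norm (1 - z ^ k)
        rw [Complex.sub_re, Complex.one_re] at h3
        rwa [norm_sub_rev] at h3
      linarith
  have hsum : (N : ℝ) * (1 - 1/(m:ℝ)) ≤ (∑ k ∈ Finset.range N, z ^ k).re := by
    rw [Complex.re_sum]
    calc (N : ℝ) * (1 - 1/(m:ℝ)) = ∑ _k ∈ Finset.range N, (1 - 1/(m:ℝ)) := by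
          rw [Finset.sum_const, Finset.card_range, nsmul_eq_mul]
      _ ≤ ∑ k ∈ Finset.range N, (z ^ k).re := Finset.sum_le_sum hre
  have habs : ‖∑ k ∈ Finset.range N, z ^ k‖ ≤ (1/(m:ℝ)) / ε := by
    rw [geom_sum_eq hz1, norm_div]
    exact div_le_div₀ (by positivity) (h N (by omega) le_rfl) hε hεz
  have hfin := le_trans hsum (le_trans (Complex.re_le_norm _) habs)
  -- hfin : N * (1 - 1/m) ≤ (1/m)/ε
  have hceil : 1 / (ε * ((m:ℝ) - 1)) ≤ (⌈1 / (ε * ((m:ℝ) - 1))⌉₊ : ℝ) := Nat.le_ceil _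
  have hNgt : 1 / (ε * ((m:ℝ) - 1)) < (N : ℝ) := by
    rw [hNdef]
    push_cast
    linarith
  have h1m : 1 - 1/(m:ℝ) = ((m:ℝ) - 1)/(m:ℝ) := by field_simp
  rw [h1m] at hfin
  have hεm1 : 0 < ε * ((m:ℝ) - 1) := by nlinarith
  rw [div_lt_iff₀ hεm1] at hNgt
  have h1 : (↑N : ℝ) * ((↑m - 1) / ↑m) * (↑m * ε) ≤ 1 / ↑m / ε * (↑m * ε) := by
    apply mul_le_mul_of_nonneg_right hfin (by positivity)
  have h2 : 1 / (m:ℝ) / ε * (↑m * ε) = 1 := by field_simp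
  have h3 : (↑N : ℝ) * ((↑m - 1) / ↑m) * (↑m * ε) = ↑N * (ε * (↑m - 1)) := by field_simp
  nlinarith [hNgt]
end

section
/- Let G be a topological abelian group, let U be a neighbourhood of 0 that generates G, let m > 1 be an integer, and let T_m be the set of continuous homomorphisms α : G → ℂ* with |α(u) - 1| ≤ 1/m for all u in the closure of U. Then T_m is equicontinuous at 0: for every ε > 0 there is a neighbourhood W of 0 in G such that |α(s) - 1| < ε for all s ∈ W and all α ∈ T_m. -/
lemma key_doubling (z : ℂ) (j : ℕ)
    (h : ∀ i < j, ‖z ^ (2 ^ i) - 1‖ ≤ 1 / 2) :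
    ‖z - 1‖ ≤ (2 / 3) ^ j * ‖z ^ (2 ^ j) - 1‖ := by
  induction j with
  | zero => simp
  | succ j ih =>
    have hsmall : ‖z ^ (2 ^ j) - 1‖ ≤ 1 / 2 := h j (Nat.lt_succ_self j)
    have hfact : z ^ (2 ^ (j + 1)) - 1 = (z ^ (2 ^ j) - 1) * (z ^ (2 ^ j) + 1) := by
      rw [pow_succ, pow_mul]; ring
    have habs : ‖z ^ (2 ^ (j + 1)) - 1‖
        = ‖z ^ (2 ^ j) - 1‖ * ‖z ^ (2 ^ j) + 1‖ := by
      rw [hfact, norm_mul]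
    have hplus : (3 : ℝ) / 2 ≤ ‖z ^ (2 ^ j) + 1‖ := by
      have htri : (2 : ℝ) ≤
          ‖z ^ (2 ^ j) + 1‖ + ‖z ^ (2 ^ j) - 1‖ := by
        calc (2 : ℝ) = ‖(z ^ (2 ^ j) + 1) + (1 - z ^ (2 ^ j))‖ := by
              rw [show (z ^ (2 ^ j) + 1) + (1 - z ^ (2 ^ j)) = 2 by ring]
              simp
          _ ≤ ‖z ^ (2 ^ j) + 1‖ + ‖1 - z ^ (2 ^ j)‖ :=
              norm_add_le _ _
          _ = ‖z ^ (2 ^ j) + 1‖ + ‖z ^ (2 ^ j) - 1‖ := by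
              rw [norm_sub_rev 1]
      linarith
    have hstep : ‖z ^ (2 ^ j) - 1‖
        ≤ (2 / 3) * ‖z ^ (2 ^ (j + 1)) - 1‖ := by
      rw [habs]
      nlinarith [norm_nonneg (z ^ (2 ^ j) - 1)]
    calc ‖z - 1‖ ≤ (2 / 3) ^ j * ‖z ^ (2 ^ j) - 1‖ :=
          ih fun i hi => h i (hi.trans (Nat.lt_succ_self j))
      _ ≤ (2 / 3) ^ j * ((2 / 3) * ‖z ^ (2 ^ (j + 1)) - 1‖) := by
          apply mul_le_mul_of_nonneg_left hstep (by positivity)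
      _ = (2 / 3) ^ (j + 1) * ‖z ^ (2 ^ (j + 1)) - 1‖ := by ring

theorem stmt_6 {G : Type*} [AddCommGroup G] [TopologicalSpace G] [IsTopologicalAddGroup G]
    (U : Set G) (hU : U ∈ nhds (0 : G)) (hgen : AddSubgroup.closure (closure U) = ⊤)
    (m : ℤ) (hm : 1 < m) (ε : ℝ) (hε : 0 < ε) :
    ∃ W ∈ nhds (0 : G), ∀ α : G → ℂ, Continuous α → (∀ x, α x ≠ 0) →
      (∀ s t, α (s + t) = α s * α t) →
      (∀ u ∈ closure U, ‖α u - 1‖ ≤ 1 / (m : ℝ)) →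
      ∀ s ∈ W, ‖α s - 1‖ < ε := by
  obtain ⟨j, hj⟩ := exists_pow_lt_of_lt_one hε (show (2 / 3 : ℝ) < 1 by norm_num)
  refine ⟨⋂ i ∈ Finset.range (j + 1), {x : G | (2 ^ i : ℕ) • x ∈ U}, ?_, ?_⟩
  · refine (Filter.biInter_finset_mem _).2 fun i _ => ?_
    have hc : Continuous fun x : G => (2 ^ i : ℕ) • x := continuous_nsmul _
    have := hc.continuousAt (x := (0 : G))
    apply this.preimage_mem_nhds
    simpa using hU
  · intro α hcont hne hmul hbound s hs
    have h0 : α 0 = 1 := by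
      have h := hmul 0 0
      rw [add_zero] at h
      have := mul_left_cancel₀ (hne 0) (h.symm.trans (mul_one (α 0)).symm)
      exact this
    have hpow : ∀ (n : ℕ) (x : G), α (n • x) = α x ^ n := by
      intro n x
      induction n with
      | zero => simpa using h0
      | succ k ih => rw [succ_nsmul, hmul, ih, pow_succ]
    have hm2 : (2 : ℝ) ≤ (m : ℝ) := by exact_mod_cast hm
    have hz : ∀ i, i ≤ j → ‖α s ^ (2 ^ i) - 1‖ ≤ 1 / 2 := by
      intro i hi
      have hsU : (2 ^ i : ℕ) • s ∈ U := by
        have := Set.mem_iInter₂.1 hs i (Finset.mem_range.2 (Nat.lt_succ_of_le hi))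
        exact this
      have := hbound _ (subset_closure hsU)
      rw [hpow] at this
      refine this.trans ?_
      rw [div_le_div_iff₀ (by linarith) (by norm_num)]
      linarith
    have hkey := key_doubling (α s) j fun i hi => hz i hi.le
    have hlast : ‖α s ^ (2 ^ j) - 1‖ ≤ 1 / 2 := hz j le_rfl
    calc ‖α s - 1‖ ≤ (2 / 3) ^ j * ‖α s ^ (2 ^ j) - 1‖ := hkey
      _ ≤ (2 / 3) ^ j * 1 := by
          apply mul_le_mul_of_nonneg_left (by linarith) (by positivity)
      _ = (2 / 3) ^ j := mul_one _
      _ < ε := hj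
end

section
/- If G is a compactly generated locally compact abelian group, then the set H(G) of all continuous group homomorphisms G → ℂ*, equipped with the compact-open topology and pointwise multiplication, is a locally compact abelian topological group. -/
open Complex Set

-- ℂˣ specific lemmas
noncomputable def expUnit (w : ℂ) : ℂˣ := Units.mk0 (Complex.exp w) (Complex.exp_ne_zero w)

lemma continuous_expUnit : Continuous expUnit := by
  apply Units.continuous_iff.mpr
  constructor
  · exact Complex.continuous_exp
  · simp only [expUnit]
    have : (fun w => ((Units.mk0 (Complex.exp w) (Complex.exp_ne_zero w))⁻¹ : ℂˣ).val)
        = fun w => Complex.exp (-w) := by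
      ext w; simp [← Complex.exp_neg]
    rw [this]
    exact Complex.continuous_exp.comp continuous_neg

lemma abs_log_sq {z : ℂ} (hz : z ≠ 0) (h : |Complex.arg z| < Real.pi / 2) :
    Complex.log (z * z) = 2 * Complex.log z := by
  rw [Complex.log_mul hz hz, two_mul]
  rw [Set.mem_Ioc]
  constructor
  · nlinarith [Real.pi_pos, abs_lt.mp h]
  · nlinarith [abs_lt.mp h]

noncomputable def Vc (n : ℕ) : Set ℂˣ := {z | ‖Complex.log z.val‖ ≤ 1 / 2 ^ n}

lemma Vc_sq {n : ℕ} {z : ℂˣ} (h1 : z ∈ Vc n) (h2 : z * z ∈ Vc n) : z ∈ Vc (n + 1) := by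
  have hlt : |Complex.arg z.val| < Real.pi / 2 := by
    have h3 : |Complex.arg z.val| ≤ ‖Complex.log z.val‖ := by
      rw [← Complex.log_im]
      exact Complex.abs_im_le_norm _
    have : (1 : ℝ) / 2 ^ n ≤ 1 := by
      rw [div_le_one (by positivity)]
      exact one_le_pow₀ one_le_two
    calc |Complex.arg z.val| ≤ 1 := h3.trans (h1.trans this)
      _ < Real.pi / 2 := by nlinarith [Real.pi_gt_three]
  have hz : (z.val) ≠ 0 := z.ne_zero
  have hlog : Complex.log (z.val * z.val) = 2 * Complex.log z.val := abs_log_sq hz hlt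
  have h2' : ‖2 * Complex.log z.val‖ ≤ 1 / 2 ^ n := by
    rw [← hlog]; exact h2
  rw [norm_mul, Complex.norm_two] at h2'
  simp only [Vc, Set.mem_setOf_eq, pow_succ]
  rw [← div_div, le_div_iff₀ two_pos]
  linarith

lemma Vc_mem (n : ℕ) : Vc n ∈ nhds (1 : ℂˣ) := by
  have hc : ContinuousAt (fun z : ℂˣ => ‖Complex.log z.val‖) 1 := by
    apply continuous_norm.continuousAt.comp
    have : ContinuousAt Complex.log ((1 : ℂˣ) : ℂ) := continuousAt_clog (by simp)
    exact this.comp Units.continuous_val.continuousAt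
  have h0 : ‖Complex.log ((1 : ℂˣ) : ℂ)‖ = 0 := by simp
  have : (fun z : ℂˣ => ‖Complex.log z.val‖) ⁻¹' (Set.Iio (1 / 2 ^ n)) ∈ nhds (1 : ℂˣ) := by
    apply hc.preimage_mem_nhds
    rw [h0]
    exact Iio_mem_nhds (by positivity)
  exact Filter.mem_of_superset this (fun z hz => by simp only [Vc, Set.mem_setOf_eq]; exact le_of_lt hz)

lemma Vc_basis : Filter.HasBasis (nhds (1 : ℂˣ)) (fun _ : ℕ => True) Vc := by
  rw [Filter.hasBasis_iff]
  intro N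
  constructor
  · intro hN
    have hg : expUnit 0 = 1 := by ext; simp [expUnit]
    have : expUnit ⁻¹' N ∈ nhds (0 : ℂ) := by
      apply continuous_expUnit.continuousAt.preimage_mem_nhds
      rwa [hg]
    obtain ⟨ε, hε, hball⟩ := Metric.mem_nhds_iff.mp this
    obtain ⟨n, hn⟩ := exists_pow_lt_of_lt_one hε (by norm_num : (1 : ℝ)/2 < 1)
    refine ⟨n, trivial, fun z hz => ?_⟩
    have hmem : Complex.log z.val ∈ Metric.ball (0 : ℂ) ε := by
      rw [mem_ball_zero_iff]
      calc ‖Complex.log z.val‖ = ‖Complex.log z.val‖ := rfl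
        _ ≤ 1 / 2 ^ n := hz
        _ = (1/2 : ℝ) ^ n := by rw [div_pow, one_pow]
        _ < ε := hn
    have := hball hmem
    rw [Set.mem_preimage] at this
    have hze : expUnit (Complex.log z.val) = z := by
      ext; simp [expUnit, Complex.exp_log z.ne_zero]
    rwa [hze] at this
  · rintro ⟨n, -, hsub⟩
    exact Filter.mem_of_superset (Vc_mem n) hsub

open Set Pointwise ContinuousMonoidHom

theorem myLC {X Y : Type*} [TopologicalSpace X] [Group X] [IsTopologicalGroup X]
    [UniformSpace Y] [CommGroup Y] [IsUniformGroup Y] [T2Space Y] [LocallyCompactSpace Y]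
    (U : Set X) (V : Set Y) (hUgen : Subgroup.closure U = ⊤)
    (hU : IsCompact U) (hV : V ∈ nhds (1 : Y))
    (h : EquicontinuousAt (fun f : {f : X →* Y | Set.MapsTo f U V} ↦ (f : X → Y)) 1) :
    LocallyCompactSpace (ContinuousMonoidHom X Y) := by
  replace h := equicontinuous_of_equicontinuousAt_one _ h
  obtain ⟨W, hWo, hWV, hWc⟩ := local_compact_nhds hV
  let S1 : Set (X →* Y) := {f | Set.MapsTo f U W}
  let S2 : Set (ContinuousMonoidHom X Y) := {f | Set.MapsTo f U W}
  let S3 : Set C(X, Y) := (↑) '' S2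
  let S4 : Set (X → Y) := (↑) '' S3
  replace h : Equicontinuous ((↑) : S1 → X → Y) :=
    h.comp (Subtype.map _root_.id fun f hf ↦ hf.mono_right hWV)
  have hS4 : S4 = (↑) '' S1 := by
    ext
    constructor
    · rintro ⟨-, ⟨f, hf, rfl⟩, rfl⟩
      exact ⟨f, hf, rfl⟩
    · rintro ⟨f, hf, rfl⟩
      exact ⟨⟨f, h.continuous ⟨f, hf⟩⟩, ⟨⟨f, h.continuous ⟨f, hf⟩⟩, hf, rfl⟩, rfl⟩
  replace h : Equicontinuous ((↑) : S3 → X → Y) := by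
    rw [equicontinuous_iff_range, ← Set.image_eq_range] at h ⊢
    rwa [← hS4] at h
  have hS4' : S4 = Set.pi U (fun _ ↦ W) ∩ Set.range ((↑) : (X →* Y) → (X → Y)) := by
    simp_rw [hS4, Set.ext_iff, Set.mem_image, S1, Set.mem_setOf_eq]
    exact fun f ↦ ⟨fun ⟨g, hg, hf⟩ ↦ hf ▸ ⟨hg, g, rfl⟩, fun ⟨hg, g, hf⟩ ↦ ⟨g, hf ▸ hg, hf⟩⟩
  have hS4closed : IsClosed S4 :=
    hS4'.symm ▸ (isClosed_set_pi (fun _ _ ↦ hWc.isClosed)).inter (MonoidHom.isClosed_range_coe X Y)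
  -- pointwise compactness from compact generation
  have hpt : ∀ x : X, ∃ Q : Set Y, IsCompact Q ∧ ∀ f ∈ S1, f x ∈ Q := by
    intro x
    have hx : x ∈ Subgroup.closure U := hUgen ▸ Subgroup.mem_top x
    induction hx using Subgroup.closure_induction with
    | mem y hy => exact ⟨W, hWc, fun f hf ↦ hf hy⟩
    | one => exact ⟨{1}, isCompact_singleton, fun f _ ↦ by simp⟩
    | mul y z hy hz ihy ihz =>
        obtain ⟨Qy, hQyc, hQym⟩ := ihy
        obtain ⟨Qz, hQzc, hQzm⟩ := ihz
        exact ⟨Qy * Qz, hQyc.mul hQzc, fun f hf ↦ by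
          rw [map_mul]; exact Set.mul_mem_mul (hQym f hf) (hQzm f hf)⟩
    | inv y hy ihy =>
        obtain ⟨Qy, hQyc, hQym⟩ := ihy
        exact ⟨Qy⁻¹, hQyc.inv, fun f hf ↦ by
          rw [map_inv]; exact Set.inv_mem_inv.mpr (hQym f hf)⟩
  choose Q hQc hQm using hpt
  have hS4compact : IsCompact S4 := by
    refine IsCompact.of_isClosed_subset (isCompact_univ_pi fun x ↦ hQc x) hS4closed ?_
    rw [hS4]
    rintro - ⟨f, hf, rfl⟩
    exact fun x _ ↦ hQm x f hf
  have hS2 : (interior S2).Nonempty := by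
    let T : Set (ContinuousMonoidHom X Y) := {f | Set.MapsTo f U (interior W)}
    have h1 : T.Nonempty := ⟨1, fun _ _ ↦ mem_interior_iff_mem_nhds.mpr hWo⟩
    have h2 : T ⊆ S2 := fun f hf ↦ hf.mono_right interior_subset
    have h3 : IsOpen T := isOpen_induced (ContinuousMap.isOpen_setOf_mapsTo hU isOpen_interior)
    exact h1.mono (interior_maximal h2 h3)
  exact TopologicalSpace.PositiveCompacts.locallyCompactSpace_of_group
    ⟨⟨S2, (isInducing_toContinuousMap X Y).isCompact_iff.mpr
      (ArzelaAscoli.isCompact_of_equicontinuous S3 hS4compact h)⟩, hS2⟩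

theorem myLC_basis {X Y : Type*} [TopologicalSpace X] [Group X] [IsTopologicalGroup X]
    [UniformSpace Y] [CommGroup Y] [IsUniformGroup Y] [T2Space Y] [LocallyCompactSpace Y]
    [LocallyCompactSpace X] (hgen : ∃ K : Set X, IsCompact K ∧ Subgroup.closure K = ⊤)
    (V : ℕ → Set Y)
    (hV : ∀ {n x}, x ∈ V n → x * x ∈ V n → x ∈ V (n + 1))
    (hVo : Filter.HasBasis (nhds 1) (fun _ ↦ True) V) :
    LocallyCompactSpace (ContinuousMonoidHom X Y) := by
  obtain ⟨K, hKc, hKgen⟩ := hgen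
  obtain ⟨U0', hU0c', hU0o'⟩ := exists_compact_mem_nhds (1 : X)
  let U0 : Set X := K ∪ U0'
  have hU0c : IsCompact U0 := hKc.union hU0c'
  have hU0o : U0 ∈ nhds (1 : X) := Filter.mem_of_superset hU0o' Set.subset_union_right
  have hU0gen : Subgroup.closure U0 = ⊤ :=
    eq_top_iff.mpr (hKgen ▸ Subgroup.closure_mono Set.subset_union_left)
  let U_aux : ℕ → {S : Set X | S ∈ nhds 1} :=
    Nat.rec ⟨U0, hU0o⟩ <| fun _ S ↦ let h := exists_closed_nhds_one_inv_eq_mul_subset S.2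
      ⟨Classical.choose h, (Classical.choose_spec h).1⟩
  let U : ℕ → Set X := fun n ↦ (U_aux n).1
  have hU1 : ∀ n, U n ∈ nhds 1 := fun n ↦ (U_aux n).2
  have hU2 : ∀ n, U (n + 1) * U (n + 1) ⊆ U n :=
    fun n ↦ (Classical.choose_spec (exists_closed_nhds_one_inv_eq_mul_subset (U_aux n).2)).2.2.2
  have hU3 : ∀ n, U (n + 1) ⊆ U n :=
    fun n x hx ↦ hU2 n (mul_one x ▸ Set.mul_mem_mul hx (mem_of_mem_nhds (hU1 (n + 1))))
  have hU4 : ∀ f : X →* Y, Set.MapsTo f (U 0) (V 0) → ∀ n, Set.MapsTo f (U n) (V n) := by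
    intro f hf n
    induction' n with n ih
    · exact hf
    · exact fun x hx ↦ hV (ih (hU3 n hx)) (map_mul f x x ▸ ih (hU2 n (Set.mul_mem_mul hx hx)))
  apply myLC (U 0) (V 0) hU0gen hU0c (hVo.mem_of_mem trivial)
  rw [hVo.uniformity_of_nhds_one.equicontinuousAt_iff_right]
  refine fun n _ ↦ Filter.eventually_iff_exists_mem.mpr ⟨U n, hU1 n, fun x hx ⟨f, hf⟩ ↦ ?_⟩
  rw [Set.mem_setOf_eq, map_one, div_one]
  exact hU4 f hf n hx



theorem stmt_8 {G : Type*} [AddCommGroup G] [TopologicalSpace G] [IsTopologicalAddGroup G]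
    [T2Space G] [LocallyCompactSpace G]
    (hK : ∃ K : Set G, IsCompact K ∧ AddSubgroup.closure K = ⊤) :
    LocallyCompactSpace (ContinuousMonoidHom (Multiplicative G) ℂˣ) ∧
      IsTopologicalGroup (ContinuousMonoidHom (Multiplicative G) ℂˣ) := by
  refine ⟨?_, inferInstance⟩
  letI : LocallyCompactSpace (Multiplicative G) := inferInstanceAs (LocallyCompactSpace G)
  letI : UniformSpace ℂˣ := IsTopologicalGroup.rightUniformSpace ℂˣ
  haveI : IsUniformGroup ℂˣ := comm_topologicalGroup_is_uniform
  haveI : LocallyCompactSpace ℂˣ := Units.isOpenEmbedding_val.locallyCompactSpace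
  obtain ⟨K, hKc, hKgen⟩ := hK
  have hgen : ∃ K' : Set (Multiplicative G), IsCompact K' ∧ Subgroup.closure K' = ⊤ := by
    refine ⟨Multiplicative.ofAdd '' K, hKc.image continuous_ofAdd, ?_⟩
    rw [eq_top_iff]
    intro x _
    have hx : (Multiplicative.toAdd x) ∈ AddSubgroup.closure K := hKgen ▸ AddSubgroup.mem_top _
    have h2 : ∀ g ∈ AddSubgroup.closure K,
        Multiplicative.ofAdd g ∈ Subgroup.closure (Multiplicative.ofAdd '' K) := by
      intro g hg
      induction hg using AddSubgroup.closure_induction with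
      | mem y hy => exact Subgroup.subset_closure (Set.mem_image_of_mem _ hy)
      | zero => exact Subgroup.one_mem _
      | add y z hy hz ihy ihz => exact Subgroup.mul_mem _ ihy ihz
      | neg y hy ihy => exact Subgroup.inv_mem _ ihy
    exact h2 _ hx
  exact myLC_basis hgen Vc (fun h1 h2 ↦ Vc_sq h1 h2) Vc_basis
end

section
/- Let G be a compactly generated locally compact abelian group. Then every continuous group homomorphism G → ℂ* takes values in the unit circle (i.e., H(G) equals the dual group of G) if and only if G is compact. -/
open Pointwise

namespace Stmt9Aux

variable {G : Type*} [AddCommGroup G]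


/-- n-fold sumset -/
def SP (A : Set G) : ℕ → Set G
  | 0 => {0}
  | n+1 => SP A n + A

theorem SP_add (A : Set G) (a b : ℕ) : SP A (a + b) = SP A a + SP A b := by
  induction b with
  | zero => simp [SP]
  | succ k ih => rw [← add_assoc, SP, SP, ih, add_assoc]

theorem mem_SP_add {A : Set G} {x y : G} {a b : ℕ} (hx : x ∈ SP A a) (hy : y ∈ SP A b) :
    x + y ∈ SP A (a + b) := by
  rw [SP_add]; exact Set.add_mem_add hx hy

theorem zero_mem_SP (A : Set G) (h0 : (0:G) ∈ A) (n : ℕ) : (0:G) ∈ SP A n := by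
  induction n with
  | zero => rfl
  | succ k ih => show (0:G) ∈ SP A k + A; simpa using Set.add_mem_add ih h0

theorem SP_mono (A : Set G) (h0 : (0:G) ∈ A) {a b : ℕ} (hab : a ≤ b) : SP A a ⊆ SP A b := by
  intro x hx
  obtain ⟨c, rfl⟩ := Nat.exists_eq_add_of_le hab
  simpa using mem_SP_add hx (zero_mem_SP A h0 c)

theorem neg_mem_SP {A : Set G} (hsym : ∀ a ∈ A, -a ∈ A) {x : G} {n : ℕ}
    (hx : x ∈ SP A n) : -x ∈ SP A n := by
  induction n generalizing x with
  | zero => simp_all [SP]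
  | succ k ih =>
    obtain ⟨y, hy, a, ha, rfl⟩ := hx
    rw [neg_add]
    exact Set.add_mem_add (ih hy) (hsym a ha)

theorem SP_SP (A : Set G) (m k : ℕ) : SP (SP A m) k = SP A (m * k) := by
  induction k with
  | zero => simp [SP]
  | succ n ih => rw [SP, ih, Nat.mul_succ, SP_add]

theorem sum_mem_SP {A : Set G} {ι : Type*} (s : Finset ι) (v : ι → G)
    (h : ∀ i ∈ s, v i ∈ A) : ∑ i ∈ s, v i ∈ SP A s.card := by
  classical
  induction s using Finset.induction_on with
  | empty => simp [SP]
  | @insert a s' hnot ih =>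
    rw [Finset.sum_insert hnot, Finset.card_insert_of_notMem hnot, add_comm (v a)]
    exact mem_SP_add (ih fun i hi => h i (Finset.mem_insert_of_mem hi))
      (by simpa [SP] using h a (Finset.mem_insert_self a s'))

theorem exists_decomp {A : Set G} {x : G} {n : ℕ} (hx : x ∈ SP A n) :
    ∃ v : Fin n → G, (∀ i, v i ∈ A) ∧ ∑ i, v i = x := by
  induction n generalizing x with
  | zero => exact ⟨![], by simp, by simpa [SP] using hx.symm⟩
  | succ k ih =>
    obtain ⟨y, hy, a, ha, rfl⟩ := hx
    obtain ⟨v, hv, hsum⟩ := ih hy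
    refine ⟨Fin.snoc v a, fun i => ?_, by rw [Fin.sum_snoc, hsum]⟩
    induction i using Fin.lastCases with
    | last => simpa using ha
    | cast j => simpa using hv j

noncomputable def len (A : Set G) (x : G) : ℕ := sInf {n | x ∈ SP A n}

section len
variable {A : Set G} (h0 : (0:G) ∈ A) (hsym : ∀ a ∈ A, -a ∈ A)
  (hcov : ∀ x : G, ∃ n, x ∈ SP A n)

include hcov in
theorem mem_SP_len (x : G) : x ∈ SP A (len A x) := Nat.sInf_mem (hcov x)

include h0 hcov in
theorem len_le_iff {x : G} {n : ℕ} : len A x ≤ n ↔ x ∈ SP A n := by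
  constructor
  · intro h; exact SP_mono A h0 h (mem_SP_len hcov x)
  · intro h; exact Nat.sInf_le h

theorem len_zero : len A (0:G) = 0 := by
  have h0' : (0:G) ∈ SP A 0 := rfl
  have := Nat.sInf_le (show 0 ∈ {n | (0:G) ∈ SP A n} from h0')
  simpa [len] using this

include hcov in
theorem eq_zero_of_len_eq_zero {x : G} (h : len A x = 0) : x = 0 := by
  have := mem_SP_len hcov x
  rw [h] at this
  simpa [SP] using this

include h0 hcov in
theorem len_add (x y : G) : len A (x + y) ≤ len A x + len A y :=
  (len_le_iff h0 hcov).2 (mem_SP_add (mem_SP_len hcov x) (mem_SP_len hcov y))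

include hsym hcov in
theorem len_neg (x : G) : len A (-x) ≤ len A x :=
  Nat.sInf_le (neg_mem_SP hsym (mem_SP_len hcov x))

include h0 hcov in
theorem len_nsmul (k : ℕ) (x : G) : len A (k • x) ≤ k * len A x := by
  induction k with
  | zero => simp [len_zero]
  | succ n ih =>
    rw [succ_nsmul]
    calc len A (n • x + x) ≤ len A (n • x) + len A x := len_add h0 hcov _ _
      _ ≤ n * len A x + len A x := by omega
      _ = (n+1) * len A x := by ring

include h0 hcov in
theorem len_lower (x y : G) : len A x ≤ len A (x - y) + len A y := by
  calc len A x = len A (x - y + y) := by rw [sub_add_cancel]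
    _ ≤ len A (x - y) + len A y := len_add h0 hcov _ _

end len


section P
variable (ℓ : G → ℕ) (hl0 : ℓ 0 = 0) (hladd : ∀ x y, ℓ (x + y) ≤ ℓ x + ℓ y)
  (hlsmul : ∀ (k : ℕ) (x : G), ℓ (k • x) ≤ k * ℓ x)

noncomputable def pf (g : G) : ℝ := ⨅ n : ℕ, (ℓ ((n+1) • g) : ℝ) / ((n+1 : ℕ) : ℝ)

variable {ℓ}

theorem pf_bdd (g : G) : BddBelow (Set.range fun n : ℕ => (ℓ ((n+1) • g) : ℝ) / ((n+1 : ℕ) : ℝ)) := by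
  refine ⟨0, fun r hr => ?_⟩
  obtain ⟨n, rfl⟩ := hr
  positivity

theorem pf_le (g : G) (n : ℕ) : pf ℓ g ≤ (ℓ ((n+1) • g) : ℝ) / ((n+1 : ℕ) : ℝ) :=
  ciInf_le (pf_bdd g) n

theorem pf_le' (g : G) (m : ℕ) (hm : 0 < m) : pf ℓ g ≤ (ℓ (m • g) : ℝ) / (m : ℝ) := by
  obtain ⟨n, rfl⟩ : ∃ n, m = n + 1 := ⟨m - 1, by omega⟩
  exact pf_le g n

theorem pf_nonneg (g : G) : 0 ≤ pf ℓ g :=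
  le_ciInf fun n => by positivity

include hl0 in
theorem pf_zero : pf ℓ (0 : G) = 0 := by
  have h : ∀ n : ℕ, (ℓ ((n+1) • (0:G)) : ℝ) / ((n+1 : ℕ) : ℝ) = 0 := fun n => by
    rw [smul_zero, hl0]; simp
  rw [pf]
  simp only [h]
  exact ciInf_const

include hlsmul in
theorem pf_nsmul (m : ℕ) (hm : 0 < m) (g : G) : pf ℓ (m • g) = m * pf ℓ g := by
  have hmR : (0:ℝ) < (m:ℝ) := by exact_mod_cast hm
  have hle : pf ℓ (m • g) ≤ m * pf ℓ g := by
    rw [← div_le_iff₀' hmR]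
    refine le_ciInf fun n => ?_
    have hnR : (0:ℝ) < ((n+1 : ℕ) : ℝ) := by positivity
    have h1 : pf ℓ (m • g) ≤ (ℓ ((n+1) • m • g) : ℝ) / ((n+1 : ℕ) : ℝ) := pf_le _ n
    have h2 : (ℓ ((n+1) • m • g) : ℝ) ≤ (m : ℝ) * (ℓ ((n+1) • g) : ℝ) := by
      rw [smul_comm]
      exact_mod_cast hlsmul m _
    rw [div_le_div_iff₀ hmR hnR]
    rw [le_div_iff₀ hnR] at h1
    nlinarith
  have hge : (m : ℝ) * pf ℓ g ≤ pf ℓ (m • g) := by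
    refine le_ciInf fun n => ?_
    have h1 : pf ℓ g ≤ (ℓ (((n+1) * m) • g) : ℝ) / (((n+1) * m : ℕ) : ℝ) :=
      pf_le' g ((n+1) * m) (by positivity)
    have h2 : ((n+1) : ℕ) • m • g = ((n+1) * m) • g := by rw [mul_smul]
    rw [h2]
    have hnR : (0:ℝ) < ((n+1 : ℕ) : ℝ) := by positivity
    rw [le_div_iff₀ (by positivity : (0:ℝ) < (((n+1) * m : ℕ) : ℝ))] at h1
    rw [le_div_iff₀ hnR]
    push_cast at h1 ⊢
    nlinarith
  linarith

include hladd hlsmul in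
theorem pf_add (g h : G) : pf ℓ (g + h) ≤ pf ℓ g + pf ℓ h := by
  have key : ∀ n₁ n₂ : ℕ, pf ℓ (g + h) ≤
      (ℓ ((n₁+1) • g) : ℝ) / ((n₁+1 : ℕ) : ℝ) + (ℓ ((n₂+1) • h) : ℝ) / ((n₂+1 : ℕ) : ℝ) := by
    intro n₁ n₂
    set N : ℕ := (n₁+1) * (n₂+1) with hN
    have hNpos : 0 < N := by positivity
    have h1 : pf ℓ (g + h) ≤ (ℓ (N • (g + h)) : ℝ) / (N : ℝ) := pf_le' _ N hNpos
    have h2 : ℓ (N • (g + h)) ≤ (n₂+1) * ℓ ((n₁+1) • g) + (n₁+1) * ℓ ((n₂+1) • h) := by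
      have ha : ℓ (N • (g + h)) ≤ ℓ (N • g) + ℓ (N • h) := by
        rw [smul_add]; exact hladd _ _
      have h3 : ℓ (N • g) ≤ (n₂+1) * ℓ ((n₁+1) • g) := by
        have e : N • g = (n₂+1) • (n₁+1) • g := by rw [← mul_smul, hN, mul_comm]
        rw [e]; exact hlsmul _ _
      have h4 : ℓ (N • h) ≤ (n₁+1) * ℓ ((n₂+1) • h) := by
        have e : N • h = (n₁+1) • (n₂+1) • h := by rw [← mul_smul, hN]
        rw [e]; exact hlsmul _ _
      omega
    have h2R : (ℓ (N • (g + h)) : ℝ) ≤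
        ((n₂+1 : ℕ) : ℝ) * (ℓ ((n₁+1) • g) : ℝ) + ((n₁+1 : ℕ) : ℝ) * (ℓ ((n₂+1) • h) : ℝ) := by
      exact_mod_cast h2
    have hNR : (0:ℝ) < (N : ℝ) := by exact_mod_cast hNpos
    have hn1R : (0:ℝ) < ((n₁+1 : ℕ) : ℝ) := by positivity
    have hn2R : (0:ℝ) < ((n₂+1 : ℕ) : ℝ) := by positivity
    have hNeq : (N : ℝ) = ((n₁+1 : ℕ) : ℝ) * ((n₂+1 : ℕ) : ℝ) := by
      rw [hN]; push_cast; ring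
    calc pf ℓ (g + h) ≤ (ℓ (N • (g + h)) : ℝ) / (N : ℝ) := h1
      _ ≤ (((n₂+1 : ℕ) : ℝ) * (ℓ ((n₁+1) • g) : ℝ) + ((n₁+1 : ℕ) : ℝ) * (ℓ ((n₂+1) • h) : ℝ)) / (N : ℝ) :=
          by gcongr
      _ = (ℓ ((n₁+1) • g) : ℝ) / ((n₁+1 : ℕ) : ℝ) + (ℓ ((n₂+1) • h) : ℝ) / ((n₂+1 : ℕ) : ℝ) := by
          rw [hNeq]
          field_simp
  have step1 : ∀ n₂ : ℕ, pf ℓ (g + h) - (ℓ ((n₂+1) • h) : ℝ) / ((n₂+1 : ℕ) : ℝ) ≤ pf ℓ g := by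
    intro n₂
    refine le_ciInf fun n₁ => ?_
    have := key n₁ n₂
    linarith
  have step2 : pf ℓ (g + h) - pf ℓ g ≤ pf ℓ h := by
    refine le_ciInf fun n₂ => ?_
    have := step1 n₂
    linarith
  linarith
end P


section HB
variable (p : G → ℝ) (hp0 : p 0 = 0) (hpadd : ∀ x y, p (x + y) ≤ p x + p y)
  (hphom : ∀ (n : ℕ), 0 < n → ∀ x, p (n • x) = n * p x) (hpnn : ∀ x, 0 ≤ p x)

include hp0 hpadd hphom hpnn

theorem hb_step (f : G →ₗ.[ℤ] ℝ) (hf : ∀ x : f.domain, f x ≤ p x) {z : G} (hz : z ∉ f.domain) :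
    ∃ g : G →ₗ.[ℤ] ℝ, f ≤ g ∧ f ≠ g ∧ ∀ x : g.domain, g x ≤ p x := by
  classical
  set UB : Set ℝ :=
    {r | ∃ (h : f.domain) (n : ℕ), 0 < n ∧ r = (p (↑h + n • z) - f h) / n} with hUB
  set LB : Set ℝ :=
    {r | ∃ (h : f.domain) (n : ℕ), 0 < n ∧ r = (f h - p (↑h - n • z)) / n} with hLB
  have key : ∀ a ∈ LB, ∀ b ∈ UB, a ≤ b := by
    rintro a ⟨h₁, n₁, hn₁, rfl⟩ b ⟨h₂, n₂, hn₂, rfl⟩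
    rw [div_le_div_iff₀ (by positivity) (by positivity)]
    have e1 : (n₂ : ℝ) * f h₁ + n₁ * f h₂ = f ((n₂:ℤ) • h₁ + (n₁:ℤ) • h₂) := by
      rw [LinearPMap.map_add, LinearPMap.map_smul, LinearPMap.map_smul]
      push_cast [zsmul_eq_mul]
      ring
    have e2 : (((n₂:ℤ) • h₁ + (n₁:ℤ) • h₂ : f.domain) : G)
        = (n₂:ℕ) • ((h₁ : G) - (n₁:ℕ) • z) + (n₁:ℕ) • ((h₂ : G) + (n₂:ℕ) • z) := by
      push_cast [natCast_zsmul]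
      rw [smul_sub, smul_add, smul_comm]
      abel
    have e3 : f ((n₂:ℤ) • h₁ + (n₁:ℤ) • h₂) ≤ p (((n₂:ℤ) • h₁ + (n₁:ℤ) • h₂ : f.domain) : G) := hf _
    rw [e2] at e3
    have e4 : p ((n₂:ℕ) • ((h₁ : G) - (n₁:ℕ) • z) + (n₁:ℕ) • ((h₂ : G) + (n₂:ℕ) • z))
        ≤ n₂ * p ((h₁ : G) - n₁ • z) + n₁ * p ((h₂ : G) + n₂ • z) := by
      calc p ((n₂:ℕ) • ((h₁ : G) - (n₁:ℕ) • z) + (n₁:ℕ) • ((h₂ : G) + (n₂:ℕ) • z))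
          ≤ p ((n₂:ℕ) • ((h₁ : G) - (n₁:ℕ) • z)) + p ((n₁:ℕ) • ((h₂ : G) + (n₂:ℕ) • z)) :=
            hpadd _ _
        _ = _ := by rw [hphom n₂ hn₂, hphom n₁ hn₁]
    nlinarith [e3, e4, e1.symm ▸ e3]
  have UBne : UB.Nonempty := by
    exact ⟨(p ((0 : f.domain) + (1:ℕ) • z) - f 0) / (1:ℕ), 0, 1, one_pos, rfl⟩
  have LBne : LB.Nonempty := by
    exact ⟨(f 0 - p ((0 : f.domain) - (1:ℕ) • z)) / (1:ℕ), 0, 1, one_pos, rfl⟩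
  have bdd : BddBelow UB := LBne.imp fun a ha => fun b hb => key a ha b hb
  set v : ℝ := sInf UB with hv
  have main : ∀ (h : f.domain) (m : ℤ), f h + m * v ≤ p (↑h + m • z) := by
    intro h m
    rcases lt_trichotomy m 0 with hm | rfl | hm
    · -- m negative
      obtain ⟨n, hn, rfl⟩ : ∃ n : ℕ, 0 < n ∧ m = -(n:ℤ) := by
        refine ⟨m.natAbs, by omega, by omega⟩
      have hlow : (f h - p ((h:G) - n • z)) / n ≤ v :=
        le_csInf UBne fun b hb => key _ ⟨h, n, hn, rfl⟩ b hb
      rw [div_le_iff₀ (by positivity)] at hlow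
      have : ((-(n:ℤ)) • z : G) = -((n:ℕ) • z) := by
        push_cast
        simp [natCast_zsmul]
      rw [this]
      have : (h:G) + -((n:ℕ) • z) = (h:G) - (n:ℕ) • z := by abel
      rw [this]
      push_cast
      nlinarith [hlow]
    · simpa [hf h] using hf h
    · obtain ⟨n, hn, rfl⟩ : ∃ n : ℕ, 0 < n ∧ m = (n:ℤ) := ⟨m.natAbs, by omega, by omega⟩
      have hup : v ≤ (p ((h:G) + n • z) - f h) / n := csInf_le bdd ⟨h, n, hn, rfl⟩
      rw [le_div_iff₀ (by positivity)] at hup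
      rw [natCast_zsmul z n]
      push_cast
      nlinarith [hup]
  have H0 : ∀ c : ℤ, c • z = 0 → c • v = 0 := by
    intro c hc
    have h1 := main 0 c
    have h2 := main 0 (-c)
    rw [Submodule.coe_zero, zero_add, hc, hp0, LinearPMap.map_zero] at h1
    rw [Submodule.coe_zero, zero_add, neg_smul, hc, neg_zero, hp0, LinearPMap.map_zero] at h2
    have : (c:ℝ) * v = 0 := by push_cast at h1 h2 ⊢; nlinarith
    simpa [zsmul_eq_mul] using this
  set g' := LinearPMap.mkSpanSingleton' (σ := RingHom.id ℤ) z v H0 with hg'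
  have compat : ∀ (x : f.domain) (y : g'.domain), (x : G) = y → f x = g' y := by
    rintro x ⟨yv, hyv⟩ hxy
    obtain ⟨c, hc⟩ := (Submodule.mem_span_singleton).1 hyv
    have hyv' : c • z ∈ g'.domain := hc ▸ hyv
    have happ : g' ⟨c • z, hyv'⟩ = c • v := LinearPMap.mkSpanSingleton'_apply z v H0 c _
    have hco : (⟨yv, hyv⟩ : g'.domain) = ⟨c • z, hyv'⟩ := by
      apply Subtype.ext; exact hc.symm
    rw [hco, happ]
    simp only at hxy
    have hxz : (x : G) = c • z := by rw [hxy, ← hc]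
    have h1 := main x (-c)
    have h2 := main (-x) c
    rw [neg_smul, ← hxz, add_neg_cancel, hp0] at h1
    have e2 : ((-x : f.domain) : G) + c • z = 0 := by
      rw [← hxz]; push_cast; abel
    rw [e2, hp0, LinearPMap.map_neg] at h2
    have : (f x : ℝ) = c * v := by push_cast at h1 h2 ⊢; nlinarith
    simpa [zsmul_eq_mul] using this
  refine ⟨f.sup g' compat, f.left_le_sup g' compat, ?_, ?_⟩
  · intro heq
    have hzmem : z ∈ (f.sup g' compat).domain := by
      rw [LinearPMap.domain_sup]
      exact Submodule.mem_sup_right (Submodule.mem_span_singleton_self z)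
    rw [← heq] at hzmem
    exact hz hzmem
  · rintro ⟨xv, hxv⟩
    rw [LinearPMap.domain_sup] at hxv
    obtain ⟨a, ha, b, hb, hab⟩ := Submodule.mem_sup.1 hxv
    obtain ⟨c, hc⟩ := (Submodule.mem_span_singleton).1 hb
    have hxv' : xv ∈ (f.sup g' compat).domain := by rw [LinearPMap.domain_sup]; exact hxv
    have happ := LinearPMap.sup_apply compat ⟨a, ha⟩ ⟨b, hb⟩ ⟨xv, hxv'⟩ (by simp [hab])
    erw [happ]
    have hbco : (⟨b, hb⟩ : g'.domain) = ⟨c • z, hc ▸ hb⟩ := by apply Subtype.ext; exact hc.symm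
    rw [hbco, LinearPMap.mkSpanSingleton'_apply]
    have := main ⟨a, ha⟩ c
    have exv : xv = a + c • z := by rw [hc, hab]
    subst exv
    simpa [zsmul_eq_mul] using this

theorem hb_exists (y : G) (hy : ∀ c : ℤ, c • y = 0 → c = 0) :
    ∃ φ : G →+ ℝ, (∀ x, φ x ≤ p x) ∧ φ y = p y := by
  classical
  have H₀ : ∀ c : ℤ, c • y = 0 → c • (p y) = 0 := fun c hc => by rw [hy c hc, zero_smul]
  set f₀ := LinearPMap.mkSpanSingleton' (σ := RingHom.id ℤ) y (p y) H₀ with hf₀def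
  have hf₀ : ∀ x : f₀.domain, f₀ x ≤ p x := by
    rintro ⟨xv, hxv⟩
    obtain ⟨c, hc⟩ := (Submodule.mem_span_singleton).1 hxv
    have hco : (⟨xv, hxv⟩ : f₀.domain) = ⟨c • y, hc ▸ hxv⟩ := by apply Subtype.ext; exact hc.symm
    rw [hco, LinearPMap.mkSpanSingleton'_apply]
    have hxy : xv = c • y := hc.symm
    subst hxy
    rcases lt_trichotomy c 0 with hcneg | rfl | hcpos
    · have : (c:ℝ) * p y ≤ 0 := mul_nonpos_of_nonpos_of_nonneg (by exact_mod_cast hcneg.le) (hpnn y)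
      simpa [zsmul_eq_mul] using this.trans (hpnn _)
    · simp [hp0]
    · obtain ⟨n, hn, rfl⟩ : ∃ n : ℕ, 0 < n ∧ c = (n:ℤ) := ⟨c.natAbs, by omega, by omega⟩
      show (n:ℤ) • p y ≤ p ((n:ℤ) • y)
      rw [natCast_zsmul y n, hphom n hn]
      simp [zsmul_eq_mul]
  set S : Set (G →ₗ.[ℤ] ℝ) := {f | ∀ x : f.domain, f x ≤ p x} with hS
  have hSc : ∀ c ⊆ S, IsChain (· ≤ ·) c → ∀ y' ∈ c, ∃ ub ∈ S, ∀ z ∈ c, z ≤ ub := by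
    intro c hcs c_chain y' hy'
    have cne : c.Nonempty := ⟨y', hy'⟩
    have hcd : DirectedOn (· ≤ ·) c := c_chain.directedOn
    refine ⟨LinearPMap.sSup c hcd, ?_, fun _ => LinearPMap.le_sSup hcd⟩
    rintro ⟨x, hx⟩
    have hdir : DirectedOn (· ≤ ·) (LinearPMap.domain '' c) :=
      directedOn_image.2 (hcd.mono LinearPMap.domain_mono.monotone)
    rcases (Submodule.mem_sSup_of_directed (cne.image _) hdir).1 hx with ⟨_, ⟨f, hfc, rfl⟩, hfx⟩
    have happ := LinearPMap.sSup_apply hcd hfc ⟨x, hfx⟩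
    exact le_trans (le_of_eq happ) (hcs hfc ⟨x, hfx⟩)
  obtain ⟨q, hf₀q, hqmax⟩ := zorn_le_nonempty₀ S hSc f₀ hf₀
  have hqS : q ∈ S := hqmax.prop
  have htop : q.domain = ⊤ := by
    by_contra h
    obtain ⟨z, hz⟩ : ∃ z : G, z ∉ q.domain := by
      by_contra h2
      push_neg at h2
      exact h (Submodule.eq_top_iff'.2 h2)
    obtain ⟨g, hqg, hne, hgS⟩ := hb_step p hp0 hpadd hphom hpnn q hqS hz
    exact hne (hqmax.eq_of_le hgS hqg)
  have hmem : ∀ g : G, g ∈ q.domain := fun g => htop ▸ Submodule.mem_top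
  refine ⟨AddMonoidHom.mk' (fun g => q ⟨g, hmem g⟩) ?_, ?_, ?_⟩
  · intro a b
    show q (⟨a, hmem a⟩ + ⟨b, hmem b⟩) = q ⟨a, hmem a⟩ + q ⟨b, hmem b⟩
    exact LinearPMap.map_add q _ _
  · intro x
    exact hqS ⟨x, hmem x⟩
  · have hymem : y ∈ f₀.domain := Submodule.mem_span_singleton_self y
    have := hf₀q.2 (x := ⟨y, hymem⟩) (y := ⟨y, hmem y⟩) rfl
    simp only [AddMonoidHom.mk'_apply]
    rw [← this, LinearPMap.mkSpanSingleton'_apply_self]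

end HB


variable [TopologicalSpace G] [IsTopologicalAddGroup G]

theorem SP_compact {V : Set G} (hVc : IsCompact V) (n : ℕ) : IsCompact (SP V n) := by
  induction n with
  | zero => exact isCompact_singleton
  | succ k ih => exact ih.add hVc

theorem exists_good_element (hnc : ¬ CompactSpace G) {V : Set G} (hVc : IsCompact V)
    (hV0 : (0:G) ∈ interior V) (hVsym : ∀ a ∈ V, -a ∈ V)
    (hcov : ∀ x : G, ∃ n, x ∈ SP V n) :
    ∃ y : G, ∀ n : ℕ, 3 * n ≤ len V (n • y) := by
  classical
  have hV0' : (0:G) ∈ V := interior_subset hV0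
  -- the coarser generating set W
  set W : Set G := SP V 4 with hW
  have hW0 : (0:G) ∈ W := zero_mem_SP V hV0' 4
  have hWsym : ∀ a ∈ W, -a ∈ W := fun a ha => neg_mem_SP hVsym ha
  have hWcov : ∀ x : G, ∃ n, x ∈ SP W n := by
    intro x
    obtain ⟨n, hn⟩ := hcov x
    exact ⟨n, by rw [hW, SP_SP]; exact SP_mono V hV0' (by omega) hn⟩
  have hWV : ∀ (x : G) (n : ℕ), x ∈ SP W n → x ∈ SP V (4 * n) := by
    intro x n hx; rwa [hW, SP_SP] at hx
  have hVW : ∀ (x : G) (n : ℕ), x ∈ SP V n → x ∈ SP W ((n + 3) / 4) := by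
    intro x n hx
    rw [hW, SP_SP]
    exact SP_mono V hV0' (by omega) hx
  -- unboundedness
  have hunb : ∀ n : ℕ, ∃ x : G, x ∉ SP V n := by
    intro n
    by_contra h
    push_neg at h
    exact hnc (isCompact_univ_iff.1 (by
      convert SP_compact hVc n using 1
      exact (Set.eq_univ_iff_forall.2 h).symm))
  -- finite net for W
  obtain ⟨t, ht1, ht2⟩ := (SP_compact hVc 4).elim_nhds_subcover
    (fun y => {y} + interior V) (fun y _ => by
      refine IsOpen.mem_nhds (isOpen_interior.add_left) ?_
      exact ⟨y, rfl, 0, hV0, by simp⟩)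
  have htne : ∃ y₀, y₀ ∈ t := by
    have := ht2 hW0
    simp only [Set.mem_iUnion] at this
    obtain ⟨y, hy, _⟩ := this
    exact ⟨y, hy⟩
  -- per-k statement
  have perk : ∀ k : ℕ, ∃ y ∈ t, ∀ n ≤ k, 3 * n ≤ len V (n • y) + 6 := by
    intro k
    rcases Nat.eq_zero_or_pos k with rfl | hk
    · obtain ⟨y₀, hy₀⟩ := htne
      exact ⟨y₀, hy₀, fun n hn => by omega⟩
    obtain ⟨g, hg⟩ := hunb (4 * (t.card * k) + 4)
    set K' := len W g with hK'def
    have hK' : t.card * k < K' := by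
      by_contra h
      push_neg at h
      exact hg (SP_mono V hV0' (by omega) (hWV g K' (mem_SP_len hWcov g)))
    obtain ⟨v, hv, hvsum⟩ := exists_decomp (mem_SP_len hWcov g)
    -- assign net points
    have hchoice : ∀ i : Fin K', ∃ y ∈ t, v i ∈ {y} + interior V := by
      intro i
      have := ht2 (hv i)
      simpa only [Set.mem_iUnion, exists_prop] using this
    choose c hc1 hc2 using hchoice
    -- pigeonhole
    have hcard : t.card * (k-1) < Finset.univ.card (α := Fin K') := by
      have h1 : t.card * (k-1) ≤ t.card * k := Nat.mul_le_mul_left _ (by omega)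
      simpa using by omega
    obtain ⟨y, hyt, hfib⟩ := Finset.exists_lt_card_fiber_of_mul_lt_card_of_maps_to
      (s := Finset.univ) (f := c) (t := t) (n := k - 1) (fun i _ => hc1 i) hcard
    set T : Finset (Fin K') := Finset.univ.filter (fun i => c i = y) with hT
    have hTcard : k ≤ T.card := by
      have := hfib
      omega
    refine ⟨y, hyt, fun n hn => ?_⟩
    obtain ⟨T', hT'sub, hT'card⟩ := Finset.exists_subset_card_eq (le_trans hn hTcard)
    set xn : G := ∑ i ∈ T', v i with hxn
    -- (a) len W xn ≥ n
    have hcompl : g - xn = ∑ i ∈ T'ᶜ, v i := by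
      have hsplit := Finset.sum_add_sum_compl T' v
      rw [hvsum] at hsplit
      rw [hxn, ← hsplit]
      abel
    have hcomplcard : T'ᶜ.card = K' - n := by
      rw [Finset.card_compl, hT'card]
      simp
    have hgx : g - xn ∈ SP W (K' - n) := by
      rw [hcompl, ← hcomplcard]
      exact sum_mem_SP _ _ (fun i _ => hv i)
    have hnK' : n ≤ K' := by
      have htpos : 0 < t.card := Finset.card_pos.2 htne
      have h1 : k ≤ t.card * k := Nat.le_mul_of_pos_left k htpos
      omega
    have hxnlen : n ≤ len W xn := by
      have h1 : len W g ≤ len W (g - (g - xn)) + len W (g - xn) := by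
        have := len_lower hW0 hWcov g (g - xn)
        simpa using this
      have h2 : len W (g - xn) ≤ K' - n := (len_le_iff hW0 hWcov).2 hgx
      have h3 : g - (g - xn) = xn := by abel
      rw [h3] at h1
      omega
    -- (b) xn - n • y ∈ SP V n
    have hb : xn - n • y ∈ SP V n := by
      have heq : xn - n • y = ∑ i ∈ T', (v i - y) := by
        rw [Finset.sum_sub_distrib, ← hxn, Finset.sum_const, hT'card]
      rw [heq, ← hT'card]
      refine sum_mem_SP _ _ (fun i hi => ?_)
      have hiT : c i = y := by
        have := hT'sub hi
        simp [hT] at this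
        exact this
      have := hc2 i
      rw [hiT] at this
      obtain ⟨a, ha, b, hb2, hab⟩ := this
      simp only [Set.mem_singleton_iff] at ha
      have hvi : v i = y + b := by rw [← hab, ha]
      have hvib : v i - y = b := by rw [hvi]; abel
      rw [hvib]
      exact interior_subset hb2
    -- (c),(d)
    have hc' : n ≤ (n + 3) / 4 + len W (n • y) := by
      have h1 : len W xn ≤ len W (xn - n • y) + len W (n • y) := len_lower hW0 hWcov _ _
      have h2 : len W (xn - n • y) ≤ (n + 3) / 4 :=
        (len_le_iff hW0 hWcov).2 (hVW _ _ hb)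
      omega
    have hd : len W (n • y) ≤ (len V (n • y) + 3) / 4 :=
      (len_le_iff hW0 hWcov).2 (hVW _ _ (mem_SP_len hcov _))
    have e1 : 4 * ((n+3)/4) ≤ n + 3 := by omega
    have e2 : 4 * ((len V (n • y) + 3) / 4) ≤ len V (n • y) + 3 := by omega
    omega
  -- infinite pigeonhole
  choose Y hY1 hY2 using perk
  have : ∃ y : {x // x ∈ t}, Set.Infinite {k : ℕ | (⟨Y k, hY1 k⟩ : {x // x ∈ t}) = y} := by
    obtain ⟨y, hy⟩ := Finite.exists_infinite_fiber (fun k : ℕ => (⟨Y k, hY1 k⟩ : {x // x ∈ t}))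
    exact ⟨y, Set.infinite_coe_iff.1 hy⟩
  obtain ⟨⟨y, hyt⟩, hinf⟩ := this
  have hgood : ∀ n : ℕ, 3 * n ≤ len V (n • y) + 6 := by
    intro n
    obtain ⟨k, hk, hnk⟩ := hinf.exists_gt n
    have := hY2 k n (le_of_lt hnk)
    have hYk : Y k = y := congrArg Subtype.val hk
    rwa [hYk] at this
  refine ⟨y, fun n => ?_⟩
  have h7 := hgood (7 * n)
  have hsm : len V ((7 * n) • y) ≤ 7 * len V (n • y) := by
    rw [mul_smul]
    exact len_nsmul hV0' hcov 7 (n • y)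
  omega


end Stmt9Aux

open Stmt9Aux

theorem stmt_9 {G : Type*} [AddCommGroup G] [TopologicalSpace G] [IsTopologicalAddGroup G]
    [T2Space G] [LocallyCompactSpace G]
    (hK : ∃ K : Set G, IsCompact K ∧ AddSubgroup.closure K = ⊤) :
    (∀ α : G → ℂ, Continuous α → (∀ x, α x ≠ 0) → (∀ s t, α (s + t) = α s * α t) →
      ∀ s, ‖α s‖ = 1) ↔ CompactSpace G := by
  constructor
  · -- hard direction
    intro hchar
    by_contra hnc
    obtain ⟨K, hKc, hKtop⟩ := hK
    obtain ⟨N, hNc, hN⟩ := exists_compact_mem_nhds (0 : G)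
    set V : Set G := (K ∪ N) ∪ -(K ∪ N) with hVdef
    have hVc : IsCompact V := (hKc.union hNc).union (hKc.union hNc).neg
    have hNV : N ⊆ V := fun x hx => Or.inl (Or.inr hx)
    have hV0 : (0:G) ∈ interior V :=
      interior_mono hNV (mem_interior_iff_mem_nhds.2 hN)
    have hV0' : (0:G) ∈ V := interior_subset hV0
    have hVsym : ∀ a ∈ V, -a ∈ V := by
      rintro a (ha | ha)
      · exact Or.inr (by simpa using ha)
      · exact Or.inl (by simpa using ha)
    have hVmem1 : ∀ v ∈ V, v ∈ SP V 1 := fun v hv => ⟨0, rfl, v, hv, zero_add v⟩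
    -- covering
    have hcov : ∀ x : G, ∃ n, x ∈ SP V n := by
      set H : AddSubgroup G :=
        { carrier := {x | ∃ n, x ∈ SP V n}
          zero_mem' := ⟨0, rfl⟩
          add_mem' := fun ⟨n, hn⟩ ⟨m, hm⟩ => ⟨n + m, mem_SP_add hn hm⟩
          neg_mem' := fun ⟨n, hn⟩ => ⟨n, neg_mem_SP hVsym hn⟩ } with hH
      have hKH : K ⊆ (H : Set G) := fun x hx => ⟨1, hVmem1 x (Or.inl (Or.inl hx))⟩
      have : AddSubgroup.closure K ≤ H := (AddSubgroup.closure_le H).2 hKH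
      rw [hKtop] at this
      exact fun x => this (AddSubgroup.mem_top x)
    -- good element
    obtain ⟨y, hy⟩ := exists_good_element hnc hVc hV0 hVsym hcov
    set ℓ : G → ℕ := len V with hldef
    have hl0 : ℓ 0 = 0 := len_zero
    have hladd : ∀ x y, ℓ (x + y) ≤ ℓ x + ℓ y := len_add hV0' hcov
    have hlsmul : ∀ (k : ℕ) (x : G), ℓ (k • x) ≤ k * ℓ x := len_nsmul hV0' hcov
    set p : G → ℝ := pf ℓ with hpdef
    have hp0 : p 0 = 0 := pf_zero hl0
    have hpadd : ∀ x y, p (x + y) ≤ p x + p y := pf_add hladd hlsmul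
    have hphom : ∀ (n : ℕ), 0 < n → ∀ x, p (n • x) = n * p x := fun n hn x => pf_nsmul hlsmul n hn x
    have hpnn : ∀ x, 0 ≤ p x := pf_nonneg
    have hpy : 3 ≤ p y := by
      refine le_ciInf fun n => ?_
      have h1 : 3 * (n + 1) ≤ ℓ ((n+1) • y) := hy (n+1)
      rw [le_div_iff₀ (by positivity : (0:ℝ) < ((n+1 : ℕ) : ℝ))]
      have h1R : (3:ℝ) * (((n+1):ℕ) : ℝ) ≤ (ℓ ((n+1) • y) : ℝ) := by exact_mod_cast h1
      push_cast at h1R ⊢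
      linarith
    have hfree : ∀ c : ℤ, c • y = 0 → c = 0 := by
      intro c hc
      by_contra hcne
      set n : ℕ := c.natAbs with hn
      have hnpos : 0 < n := Int.natAbs_pos.2 hcne
      have hny : n • y = 0 := by
        rcases lt_or_gt_of_ne hcne with h | h
        · have : (n : ℤ) = -c := by omega
          rw [← natCast_zsmul, this, neg_smul, hc, neg_zero]
        · have : (n : ℤ) = c := by omega
          rw [← natCast_zsmul, this, hc]
      have := hy n
      rw [hny, hl0] at this
      omega
    obtain ⟨φ, hφle, hφy⟩ := hb_exists p hp0 hpadd hphom hpnn y hfree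
    -- continuity of φ
    have hlV : ∀ v ∈ V, ℓ v ≤ 1 := fun v hv => (len_le_iff hV0' hcov).2 (hVmem1 v hv)
    have hφbound : ∀ (n : ℕ) (x : G), (n+1) • x ∈ V → |φ x| ≤ 1 / ((n+1 : ℕ) : ℝ) := by
      intro n x hx
      have hnR : (0:ℝ) < ((n+1 : ℕ) : ℝ) := by positivity
      have key : ∀ z : G, z ∈ V → φ z ≤ 1 := by
        intro z hz
        calc φ z ≤ p z := hφle z
          _ ≤ (ℓ (1 • z) : ℝ) / ((1:ℕ) : ℝ) := pf_le' z 1 one_pos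
          _ ≤ 1 := by
              rw [one_smul]
              have := hlV z hz
              have : (ℓ z : ℝ) ≤ 1 := by exact_mod_cast this
              simpa using this
      have h1 : φ ((n+1) • x) ≤ 1 := key _ hx
      have hsm : φ ((n+1) • x) = ((n+1:ℕ):ℝ) * φ x := by
        rw [AddMonoidHom.map_nsmul, nsmul_eq_mul]
      rw [hsm] at h1
      have h2 : -(((n+1:ℕ):ℝ) * φ x) ≤ 1 := by
        have h2' := key _ (hVsym _ hx)
        rw [map_neg, hsm] at h2'
        linarith
      have hφx1 : φ x ≤ 1 / ((n+1:ℕ):ℝ) := by rw [le_div_iff₀ hnR]; linarith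
      have hφx2 : -φ x ≤ 1 / ((n+1:ℕ):ℝ) := by rw [le_div_iff₀ hnR]; linarith
      rw [abs_le]
      constructor <;> linarith
    have hφcont : Continuous φ := by
      refine continuous_of_continuousAt_zero φ ?_
      unfold ContinuousAt
      rw [map_zero, NormedAddCommGroup.tendsto_nhds_zero]
      intro ε hε
      obtain ⟨n, hn⟩ := exists_nat_one_div_lt hε
      have hQ : (fun x : G => (n+1) • x) ⁻¹' (interior V) ∈ nhds (0:G) := by
        apply ContinuousAt.preimage_mem_nhds (continuous_nsmul (n+1)).continuousAt
        rw [smul_zero]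
        exact isOpen_interior.mem_nhds hV0
      filter_upwards [hQ] with x hx
      have hb := hφbound n x (interior_subset hx)
      have hnorm : ‖φ x‖ = |φ x| := rfl
      rw [hnorm]
      have hεn : 1 / (((n+1):ℕ) : ℝ) < ε := by push_cast; push_cast at hn; linarith
      linarith
    -- contradiction with the character hypothesis
    set α : G → ℂ := fun g => Complex.exp (φ g) with hα
    have h1 := hchar α (Complex.continuous_exp.comp (Complex.continuous_ofReal.comp hφcont))
      (fun x => Complex.exp_ne_zero _)
      (fun s t => by simp only [hα, map_add, Complex.ofReal_add, Complex.exp_add])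
      y
    rw [hα] at h1
    simp only [Complex.norm_exp, Complex.ofReal_re] at h1
    rw [Real.exp_eq_one_iff] at h1
    rw [hφy] at h1
    linarith
  · -- easy direction
    intro hcomp α hc h0 hm
    have hα0 : α 0 = 1 := by
      have h := hm 0 0
      rw [add_zero] at h
      have h2 : α 0 * α 0 = α 0 * 1 := by rw [mul_one]; exact h.symm
      exact mul_left_cancel₀ (h0 0) h2
    have hpow : ∀ (n : ℕ) (s : G), α (n • s) = α s ^ n := by
      intro n s
      induction n with
      | zero => simpa using hα0
      | succ k ih => rw [succ_nsmul, hm, ih, pow_succ]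
    obtain ⟨M, hM⟩ : ∃ M, ∀ x : G, ‖α x‖ ≤ M := by
      obtain ⟨M, hM⟩ := (isCompact_range (continuous_norm.comp hc)).bddAbove
      exact ⟨M, fun x => hM ⟨x, rfl⟩⟩
    have hle1 : ∀ s : G, ‖α s‖ ≤ 1 := by
      intro s
      by_contra h
      push_neg at h
      obtain ⟨n, hn⟩ := pow_unbounded_of_one_lt M h
      have := hM (n • s)
      rw [hpow, norm_pow] at this
      linarith
    intro s
    have h1 := hle1 s
    have h2 := hle1 (-s)
    have h3 : ‖α s‖ * ‖α (-s)‖ = 1 := by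
      rw [← norm_mul, ← hm]
      simp [hα0]
    nlinarith [norm_nonneg (α s), norm_nonneg (α (-s))]
end

section
/- Let G be a locally compact abelian group and φ a nonzero multiplicative linear functional on the convolution algebra C_c(G). Fix f ∈ C_c(G) with φ(f) ≠ 0 and define α(s) = φ(τ_s f) / φ(f). Then α is a group homomorphism from G to ℂ*: α(s + t) = α(s) α(t) for all s, t ∈ G, and α does not depend on the choice of f (if φ(g) ≠ 0 then φ(τ_s f) φ(g) = φ(f) φ(τ_s g) for all s). -/
open MeasureTheory

theorem stmt_16 {G : Type*} [AddCommGroup G] [TopologicalSpace G] [IsTopologicalAddGroup G]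
    [LocallyCompactSpace G] [MeasurableSpace G] [BorelSpace G]
    (μ : Measure G) [μ.IsAddHaarMeasure]
    (φ : (G → ℂ) → ℂ)
    (hadd : ∀ f g : G → ℂ, Continuous f → HasCompactSupport f → Continuous g →
      HasCompactSupport g → φ (f + g) = φ f + φ g)
    (hsmul : ∀ (c : ℂ) (f : G → ℂ), Continuous f → HasCompactSupport f →
      φ (c • f) = c * φ f)
    (hmul : ∀ f g : G → ℂ, Continuous f → HasCompactSupport f → Continuous g →
      HasCompactSupport g → φ (fun t => ∫ s, f s * g (t - s) ∂μ) = φ f * φ g)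
    (hne : ∃ h : G → ℂ, Continuous h ∧ HasCompactSupport h ∧ φ h ≠ 0)
    (f : G → ℂ) (hf : Continuous f) (hfs : HasCompactSupport f) (hφf : φ f ≠ 0) :
    (∀ s t : G, φ (fun u => f (u - (s + t))) / φ f =
        (φ (fun u => f (u - s)) / φ f) * (φ (fun u => f (u - t)) / φ f)) ∧
      ∀ g : G → ℂ, Continuous g → HasCompactSupport g → φ g ≠ 0 →
        ∀ s : G, φ (fun u => f (u - s)) * φ g = φ f * φ (fun u => g (u - s)) := by
  have tc : ∀ (h : G → ℂ) (s : G), Continuous h → Continuous (fun u => h (u - s)) :=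
    fun h s hh => hh.comp (continuous_id.sub continuous_const)
  have ts : ∀ (h : G → ℂ) (s : G), HasCompactSupport h →
      HasCompactSupport (fun u => h (u - s)) :=
    fun h s hh => hh.comp_homeomorph (Homeomorph.subRight s)
  have key : ∀ g : G → ℂ, Continuous g → HasCompactSupport g →
      ∀ s : G, φ (fun u => f (u - s)) * φ g = φ f * φ (fun u => g (u - s)) := by
    intro g hg hgs s
    have h1 := hmul (fun u => f (u - s)) g (tc f s hf) (ts f s hfs) hg hgs
    have h2 := hmul f (fun u => g (u - s)) hf hfs (tc g s hg) (ts g s hgs)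
    rw [← h1, ← h2]
    congr 1
    funext t
    calc ∫ u, f (u - s) * g (t - u) ∂μ
        = ∫ u, f ((u + s) - s) * g (t - (u + s)) ∂μ := by
          rw [integral_add_right_eq_self (fun u => f (u - s) * g (t - u)) s]
      _ = ∫ u, f u * g ((t - u) - s) ∂μ := by
          congr 1; funext u; rw [add_sub_cancel_right, sub_add_eq_sub_sub]
  refine ⟨?_, fun g hg hgs _ s => key g hg hgs s⟩
  intro s t
  have h := key (fun u => f (u - t)) (tc f t hf) (ts f t hfs) s
  have h' : (fun u => (fun u => f (u - t)) (u - s)) = fun u => f (u - (s + t)) := by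
    funext u; simp [sub_sub, add_comm]
  rw [h'] at h
  rw [div_mul_div_comm, h, mul_div_mul_left _ _ hφf]
end

section
/- Let G be a second countable locally compact abelian group. Then the map α ↦ φ_α, where φ_α(f) = ∫_G f(s) α(s) dλ(s), is a bijection from the set H(G) of continuous homomorphisms G → ℂ* onto the Gel'fand space of the convolution algebra C_c(G) (the set of nonzero multiplicative linear functionals on C_c(G) that are continuous for the inductive limit topology). -/
open MeasureTheory Filter Uniformity BoundedContinuousFunction Pointwise ENNReal

set_option linter.unusedSectionVars false
set_option linter.unusedTactic false
set_option maxHeartbeats 1000000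

/-- `φ` is a nonzero multiplicative linear functional on the convolution algebra
`C_c(G)` that is continuous for the inductive limit topology (equivalently, bounded
on the functions supported in each fixed compact set). -/
def IsGelfandFunctional {G : Type*} [AddCommGroup G] [TopologicalSpace G]
    [MeasurableSpace G] (μ : Measure G) (φ : (G → ℂ) → ℂ) : Prop :=
  (∀ f g : G → ℂ, Continuous f → HasCompactSupport f → Continuous g →
      HasCompactSupport g → φ (f + g) = φ f + φ g) ∧
  (∀ (c : ℂ) (f : G → ℂ), Continuous f → HasCompactSupport f → φ (c • f) = c * φ f) ∧
  (∀ f g : G → ℂ, Continuous f → HasCompactSupport f → Continuous g →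
      HasCompactSupport g → φ (fun t => ∫ s, f s * g (t - s) ∂μ) = φ f * φ g) ∧
  (∃ h : G → ℂ, Continuous h ∧ HasCompactSupport h ∧ φ h ≠ 0) ∧
  (∀ K : Set G, IsCompact K → ∃ C : ℝ, ∀ f : G → ℂ, Continuous f → tsupport f ⊆ K →
      ‖φ f‖ ≤ C * ⨆ t : G, ‖f t‖)

/-- `α` is a generalized character on `G`. -/
def IsGenChar {G : Type*} [AddCommGroup G] [TopologicalSpace G] (α : G → ℂ) : Prop :=
  Continuous α ∧ (∀ x, α x ≠ 0) ∧ ∀ s t, α (s + t) = α s * α t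


section Aux

variable {G : Type*} [AddCommGroup G] [TopologicalSpace G] [IsTopologicalAddGroup G]
  [LocallyCompactSpace G] [SecondCountableTopology G] [MeasurableSpace G] [BorelSpace G]
  (μ : Measure G) [μ.IsAddHaarMeasure]

lemma aux_conv_char {f g α : G → ℂ} (hf : Continuous f) (hfs : HasCompactSupport f)
    (hg : Continuous g) (hgs : HasCompactSupport g) (hαc : Continuous α)
    (hαm : ∀ s t, α (s + t) = α s * α t) :
    ∫ t, (∫ s, f s * g (t - s) ∂μ) * α t ∂μ
      = (∫ s, f s * α s ∂μ) * (∫ s, g s * α s ∂μ) := by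
  set F : G × G → ℂ := fun p => f p.2 * g (p.1 - p.2) * α p.1 with hF
  have hFc : Continuous F :=
    ((hf.comp continuous_snd).mul (hg.comp (continuous_fst.sub continuous_snd))).mul
      (hαc.comp continuous_fst)
  have hFs : HasCompactSupport F := by
    apply HasCompactSupport.intro
      ((IsCompact.add hfs hgs).prod hfs)
    rintro ⟨t, s⟩ h
    by_contra hne
    have hfs' : f s ≠ 0 := fun h0 => hne (by simp [hF, h0])
    have hgs' : g (t - s) ≠ 0 := fun h0 => hne (by simp [hF, h0])
    exact h ⟨by
      have : t = s + (t - s) := by abel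
      rw [this]
      exact Set.add_mem_add (subset_tsupport f hfs') (subset_tsupport g hgs'),
      subset_tsupport f hfs'⟩
  have hFi : Integrable F (μ.prod μ) := hFc.integrable_of_hasCompactSupport hFs
  calc ∫ t, (∫ s, f s * g (t - s) ∂μ) * α t ∂μ
      = ∫ t, ∫ s, f s * g (t - s) * α t ∂μ ∂μ := by
        congr 1 with t
        rw [← integral_mul_const]
    _ = ∫ s, ∫ t, f s * g (t - s) * α t ∂μ ∂μ := by
        have := integral_integral_swap (f := fun t s => f s * g (t - s) * α t)
          (μ := μ) (ν := μ) hFi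
        exact this
    _ = ∫ s, (f s * α s) * (∫ u, g u * α u ∂μ) ∂μ := by
        congr 1 with s
        have h1 : ∫ t, g (t - s) * α t ∂μ = (∫ u, g u * α u ∂μ) * α s := by
          rw [← integral_add_right_eq_self (μ := μ) (fun t => g (t - s) * α t) s,
            ← integral_mul_const]
          congr 1 with t
          rw [add_sub_cancel_right, hαm]
          ring
        calc ∫ t, f s * g (t - s) * α t ∂μ = ∫ t, f s * (g (t - s) * α t) ∂μ := by
              congr 1 with t; ring
          _ = f s * ∫ t, g (t - s) * α t ∂μ := integral_const_mul _ _
          _ = (f s * α s) * (∫ u, g u * α u ∂μ) := by rw [h1]; ring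
    _ = (∫ s, f s * α s ∂μ) * (∫ s, g s * α s ∂μ) := integral_mul_const _ _

-- a bump function
lemma aux_bump : ∃ χ : G → ℝ, Continuous χ ∧ HasCompactSupport χ ∧ χ 0 = 1 ∧ ∀ x, 0 ≤ χ x := by
  obtain ⟨f, hf1, -, hfc, hf01⟩ :=
    exists_continuous_one_zero_of_isCompact (X := G) isCompact_singleton
      isClosed_empty (Set.disjoint_empty _)
  exact ⟨f, f.continuous, hfc, hf1 rfl, fun x => (hf01 x).1⟩

lemma aux_nonzero {α : G → ℂ} (hαc : Continuous α) (hα0 : ∀ x, α x ≠ 0)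
    (hαm : ∀ s t, α (s + t) = α s * α t) :
    ∃ h : G → ℂ, Continuous h ∧ HasCompactSupport h ∧ (∫ s, h s * α s ∂μ) ≠ 0 := by
  obtain ⟨χ, hχc, hχs, hχ0, hχnn⟩ := aux_bump (G := G)
  refine ⟨fun s => (starRingEnd ℂ) (α s) * (χ s : ℂ), (continuous_star.comp hαc).mul
    (Complex.continuous_ofReal.comp hχc), ?_, ?_⟩
  · apply HasCompactSupport.intro hχs
    intro x hx
    simp [image_eq_zero_of_notMem_tsupport hx]
  · have key : ∫ s, ((starRingEnd ℂ) (α s) * (χ s : ℂ)) * α s ∂μ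
        = ((∫ s, χ s * Complex.normSq (α s) ∂μ : ℝ) : ℂ) := by
      have he : (fun s => ((starRingEnd ℂ) (α s) * (χ s : ℂ)) * α s)
          = fun s => ((χ s * Complex.normSq (α s) : ℝ) : ℂ) := by
        funext s
        push_cast
        rw [Complex.normSq_eq_conj_mul_self]
        ring
      rw [he]
      exact integral_ofReal
    rw [key]
    have hα01 : α 0 = 1 := by
      have := hαm 0 0
      rw [add_zero] at this
      have h0 := hα0 0
      field_simp at this
      exact this.symm
    norm_cast
    have hint : Integrable (fun s => χ s * Complex.normSq (α s)) μ := by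
      apply Continuous.integrable_of_hasCompactSupport
      · exact hχc.mul (Complex.continuous_normSq.comp hαc)
      · exact hχs.mul_right
    have hnn : 0 ≤ᵐ[μ] fun s => χ s * Complex.normSq (α s) := by
      filter_upwards with s
      exact mul_nonneg (hχnn s) (Complex.normSq_nonneg _)
    have hpos : 0 < ∫ s, χ s * Complex.normSq (α s) ∂μ := by
      rw [integral_pos_iff_support_of_nonneg_ae hnn hint]
      have hopen : IsOpen {x : G | 0 < χ x * Complex.normSq (α x)} :=
        isOpen_lt continuous_const (hχc.mul (Complex.continuous_normSq.comp hαc))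
      have h0mem : (0 : G) ∈ {x : G | 0 < χ x * Complex.normSq (α x)} := by
        simp only [Set.mem_setOf_eq, hχ0, hα01]
        norm_num
      calc (0 : ENNReal) < μ {x : G | 0 < χ x * Complex.normSq (α x)} :=
            hopen.measure_pos μ ⟨0, h0mem⟩
        _ ≤ μ (Function.support fun s => χ s * Complex.normSq (α s)) := by
            apply measure_mono
            intro x hx
            exact ne_of_gt hx
      done
    exact ne_of_gt hpos

lemma aux_bound {α : G → ℂ} (hαc : Continuous α) (K : Set G) (hK : IsCompact K) :
    ∃ C : ℝ, ∀ f : G → ℂ, Continuous f → tsupport f ⊆ K →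
      ‖∫ s, f s * α s ∂μ‖ ≤ C * ⨆ t : G, ‖f t‖ := by
  set K' := closure K with hK'
  have hK'c : IsCompact K' := hK.closure
  rcases K'.eq_empty_or_nonempty with hKe | hKne
  · refine ⟨0, fun f hf hsup => ?_⟩
    have hf0 : f = 0 := by
      funext x
      refine image_eq_zero_of_notMem_tsupport fun hx => ?_
      have : x ∈ K' := subset_closure (hsup hx)
      rw [hKe] at this
      exact this.elim
    simp [hf0]
  · obtain ⟨s₀, hs₀K, hs₀⟩ := hK'c.exists_isMaxOn hKne (hαc.norm.continuousOn)
    set M := ‖α s₀‖ with hM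
    have hM0 : 0 ≤ M := norm_nonneg _
    refine ⟨M * (μ K').toReal, fun f hf hsup => ?_⟩
    have hsup' : tsupport f ⊆ K' := hsup.trans subset_closure
    have hfcs : HasCompactSupport f := HasCompactSupport.of_support_subset_isCompact hK'c
      ((subset_tsupport f).trans hsup')
    have hbdd : BddAbove (Set.range fun t => ‖f t‖) := by
      obtain ⟨B, hB⟩ := hfcs.exists_bound_of_continuous hf
      exact ⟨B, by rintro x ⟨t, rfl⟩; exact hB t⟩
    set Sf := ⨆ t : G, ‖f t‖ with hSf
    have hSf0 : 0 ≤ Sf := le_ciSup_of_le hbdd 0 (by positivity)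
    have hle : ∀ t, ‖f t‖ ≤ Sf := fun t => le_ciSup hbdd t
    have hint : Integrable (fun s => f s * α s) μ :=
      (hf.mul hαc).integrable_of_hasCompactSupport hfcs.mul_right
    have hK'm : MeasurableSet K' := isClosed_closure.measurableSet
    calc ‖∫ s, f s * α s ∂μ‖ = ‖∫ s, f s * α s ∂μ‖ := rfl
      _ ≤ ∫ s, ‖f s * α s‖ ∂μ := norm_integral_le_integral_norm _
      _ ≤ ∫ s, K'.indicator (fun _ => Sf * M) s ∂μ := by
          apply integral_mono hint.norm
          · exact (integrable_indicator_iff hK'm).2 (integrableOn_const hK'c.measure_lt_top.ne)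
          · intro s
            by_cases hs : s ∈ K'
            · simp only [Set.indicator_of_mem hs]
              rw [norm_mul]
              exact mul_le_mul (by simpa using hle s)
                (hs₀ hs) (norm_nonneg _) hSf0
            · simp only [Set.indicator_of_notMem hs]
              have : f s = 0 := image_eq_zero_of_notMem_tsupport fun hx => hs (hsup' hx)
              simp [this]
      _ = (μ K').toReal * (Sf * M) := by
          rw [integral_indicator_const _ hK'm]; simp [measureReal_def]
      _ = M * (μ K').toReal * Sf := by ring

lemma aux_inj {α β : G → ℂ} (hαc : Continuous α) (hβc : Continuous β)
    (hEq : (fun f : G → ℂ => ∫ s, f s * α s ∂μ) = (fun f => ∫ s, f s * β s ∂μ)) : α = β := by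
  funext t₀
  by_contra hne
  set γ : G → ℂ := fun s => α s - β s with hγ
  have hγc : Continuous γ := hαc.sub hβc
  have hd : γ t₀ ≠ 0 := sub_ne_zero.2 hne
  set c : ℂ := (starRingEnd ℂ) (γ t₀) with hc
  set r : G → ℝ := fun s => (c * γ s).re with hr
  have hrc : Continuous r := Complex.continuous_re.comp (continuous_const.mul hγc)
  have hrt₀ : 0 < r t₀ := by
    have h1 : c * γ t₀ = ((Complex.normSq (γ t₀) : ℝ) : ℂ) := by
      rw [hc, Complex.normSq_eq_conj_mul_self]
    have : r t₀ = Complex.normSq (γ t₀) := by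
      simp only [hr, h1, Complex.ofReal_re]
    rw [this]
    exact Complex.normSq_pos.2 hd
  set U : Set G := {s | r t₀ / 2 < r s} with hU
  have hUo : IsOpen U := isOpen_lt continuous_const hrc
  have ht₀U : t₀ ∈ U := by simp only [hU, Set.mem_setOf_eq]; linarith
  obtain ⟨K, hKc, hKint, hKU⟩ := exists_compact_subset hUo ht₀U
  set V := interior K with hV
  have hVo : IsOpen V := isOpen_interior
  have hVm : MeasurableSet V := hVo.measurableSet
  have hμV : 0 < μ V := hVo.measure_pos μ ⟨t₀, hKint⟩
  have hμV' : μ V < ⊤ := lt_of_le_of_lt (measure_mono interior_subset) hKc.measure_lt_top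
  -- test with indicator functions
  have key : ∀ δ : G → ℂ, (∫ s, (V.indicator (fun _ => c) s) * δ s ∂μ)
      = ∫ s in V, c * δ s ∂μ := by
    intro δ
    rw [← integral_indicator hVm]
    congr 1 with s
    by_cases hs : s ∈ V <;> simp [hs]
  have hkey : ∫ s in V, c * α s ∂μ = ∫ s in V, c * β s ∂μ := by
    have h1 := congrFun hEq (V.indicator fun _ => c)
    simpa only [key α, key β] using h1
  -- integrability on V
  have hbdd : ∀ (δ : G → ℂ), Continuous δ → IntegrableOn (fun s => c * δ s) V μ := by
    intro δ hδ
    have hcont : Continuous fun s => c * δ s := continuous_const.mul hδ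
    obtain ⟨M, hM⟩ : ∃ M : ℝ, ∀ s ∈ K, ‖c * δ s‖ ≤ M := by
      rcases K.eq_empty_or_nonempty with h | h
      · exact ⟨0, by simp [h]⟩
      · obtain ⟨s₀, -, hs₀⟩ := hKc.exists_isMaxOn h hcont.norm.continuousOn
        exact ⟨‖c * δ s₀‖, fun s hs => hs₀ hs⟩
    haveI : Fact (μ V < ⊤) := ⟨hμV'⟩
    refine ⟨hcont.aestronglyMeasurable.restrict, ?_⟩
    apply HasFiniteIntegral.of_bounded (C := M)
    filter_upwards [ae_restrict_mem hVm] with s hs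
    exact hM s (interior_subset hs)
  have hintγ : IntegrableOn (fun s => c * γ s) V μ := hbdd γ hγc
  have hzero : ∫ s in V, c * γ s ∂μ = 0 := by
    have he : ∫ s in V, c * γ s ∂μ = ∫ s in V, c * α s ∂μ - ∫ s in V, c * β s ∂μ := by
      rw [← integral_sub (hbdd α hαc) (hbdd β hβc)]
      congr 1 with s
      simp only [hγ]
      ring
    rw [he, hkey, sub_self]
  -- real part positivity
  have hre : ∫ s in V, r s ∂μ = 0 := by
    have := integral_re (μ := μ.restrict V) hintγ
    rw [hzero] at this
    simpa only [hr, RCLike.re_to_complex, Complex.zero_re] using this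
  have hlow : (r t₀ / 2) * (μ V).toReal ≤ ∫ s in V, r s ∂μ := by
    have h1 : ∫ _ in V, (r t₀ / 2) ∂μ = (μ V).toReal • (r t₀ / 2) := setIntegral_const _
    have h2 : ∫ _ in V, (r t₀ / 2) ∂μ ≤ ∫ s in V, r s ∂μ := by
      apply setIntegral_mono_on (integrableOn_const hμV'.ne) (by exact hintγ.re) hVm
      intro s hs
      exact le_of_lt (hKU (interior_subset hs))
    calc (r t₀ / 2) * (μ V).toReal = (μ V).toReal • (r t₀ / 2) := by
          rw [smul_eq_mul]; ring
      _ = ∫ _ in V, (r t₀ / 2) ∂μ := h1.symm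
      _ ≤ _ := h2
  have hpos : 0 < (r t₀ / 2) * (μ V).toReal := by
    apply _root_.mul_pos (by linarith)
    exact ENNReal.toReal_pos hμV.ne' hμV'.ne
  rw [hre] at hlow
  linarith

lemma aux_uc {g : G → ℂ} (hg : Continuous g) (hgs : HasCompactSupport g) :
    ∀ ε > 0, ∃ U ∈ nhds (0:G), ∀ a b : G, b - a ∈ U → dist (g a) (g b) < ε := by
  letI : UniformSpace G := IsTopologicalAddGroup.rightUniformSpace G
  haveI : IsUniformAddGroup G := isUniformAddGroup_of_addCommGroup
  have huc : UniformContinuous g := hgs.uniformContinuous_of_continuous hg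
  intro ε hε
  have h1 : {p : ℂ × ℂ | dist p.1 p.2 < ε} ∈ 𝓤 ℂ := Metric.dist_mem_uniformity hε
  have h2 := huc h1
  rw [uniformity_eq_comap_nhds_zero G] at h2
  rw [mem_map, mem_comap] at h2
  obtain ⟨U, hU, hsub⟩ := h2
  exact ⟨U, hU, fun a b hab => hsub (a := (a, b)) hab⟩

-- tsupport of a translate
lemma aux_tsupport_translate (g : G → ℂ) (a : G) :
    tsupport (fun t => g (t - a)) ⊆ {t : G | t - a ∈ tsupport g} := by
  have h1 : IsClosed {t : G | t - a ∈ tsupport g} :=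
    (isClosed_tsupport g).preimage (continuous_sub_right a)
  apply closure_minimal _ h1
  intro t ht
  exact subset_tsupport g ht

lemma aux_hcs_translate {g : G → ℂ} (hgs : HasCompactSupport g) (a : G) :
    HasCompactSupport (fun t => g (t - a)) := by
  have : (fun t => g (t - a)) = g ∘ (Homeomorph.subRight a) := rfl
  rw [this]
  exact hgs.comp_homeomorph _

lemma aux_tsupport_sub (u v : G → ℂ) :
    tsupport (fun t => u t - v t) ⊆ tsupport u ∪ tsupport v := by
  apply closure_minimal _ ((isClosed_tsupport u).union (isClosed_tsupport v))
  intro t ht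
  rw [Function.mem_support] at ht
  by_contra h
  rw [Set.mem_union] at h
  push_neg at h
  have h1 : u t = 0 := image_eq_zero_of_notMem_tsupport h.1
  have h2 : v t = 0 := image_eq_zero_of_notMem_tsupport h.2
  rw [h1, h2, sub_zero] at ht
  exact ht rfl

lemma aux_surj {φ : (G → ℂ) → ℂ}
    (hadd : ∀ f g : G → ℂ, Continuous f → HasCompactSupport f → Continuous g →
      HasCompactSupport g → φ (f + g) = φ f + φ g)
    (hsmul : ∀ (c : ℂ) (f : G → ℂ), Continuous f → HasCompactSupport f → φ (c • f) = c * φ f)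
    (hconv : ∀ f g : G → ℂ, Continuous f → HasCompactSupport f → Continuous g →
      HasCompactSupport g → φ (fun t => ∫ s, f s * g (t - s) ∂μ) = φ f * φ g)
    (hne : ∃ h : G → ℂ, Continuous h ∧ HasCompactSupport h ∧ φ h ≠ 0)
    (hbound : ∀ K : Set G, IsCompact K → ∃ C : ℝ, ∀ f : G → ℂ, Continuous f → tsupport f ⊆ K →
      ‖φ f‖ ≤ C * ⨆ t : G, ‖f t‖) :
    ∃ α : G → ℂ, (Continuous α ∧ (∀ x, α x ≠ 0) ∧ ∀ s t, α (s + t) = α s * α t) ∧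
      ∀ f : G → ℂ, Continuous f → HasCompactSupport f → φ f = ∫ s, f s * α s ∂μ := by
  obtain ⟨g₀, hg₀c, hg₀s, hg₀φ⟩ := hne
  set K₀ := tsupport g₀ with hK₀def
  have hK₀ : IsCompact K₀ := hg₀s
  set Φ : G → ℂ := fun a => φ (fun t => g₀ (t - a)) with hΦdef
  set α : G → ℂ := fun a => Φ a / φ g₀ with hαdef
  have hτc : ∀ a : G, Continuous (fun t => g₀ (t - a)) :=
    fun a => hg₀c.comp (continuous_sub_right a)
  have hτs : ∀ a : G, HasCompactSupport (fun t => g₀ (t - a)) :=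
    fun a => aux_hcs_translate hg₀s a
  -- subtraction rule for φ
  have hφsub : ∀ u v : G → ℂ, Continuous u → HasCompactSupport u → Continuous v →
      HasCompactSupport v → φ (u - v) = φ u - φ v := by
    intro u v hu hus hv hvs
    have h1 : u - v = u + (-1 : ℂ) • v := by
      funext t; simp [sub_eq_add_neg]
    have hc : Continuous ((-1 : ℂ) • v) := hv.const_smul (-1 : ℂ)
    have hs : HasCompactSupport ((-1 : ℂ) • v) := hvs.smul_left
    rw [h1, hadd u ((-1 : ℂ) • v) hu hus hc hs, hsmul (-1) v hv hvs]
    ring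
  -- the translated convolution identity
  have convid : ∀ a b : G,
      (fun t => ∫ s, g₀ (s - a) * g₀ (t - s - b) ∂μ)
        = (fun t => ∫ s, g₀ (s - (a + b)) * g₀ (t - s) ∂μ) := by
    intro a b
    funext t
    calc ∫ s, g₀ (s - a) * g₀ (t - s - b) ∂μ
        = ∫ s, g₀ (s - b - a) * g₀ (t - (s - b) - b) ∂μ :=
          (integral_sub_right_eq_self (fun s => g₀ (s - a) * g₀ (t - s - b)) b).symm
      _ = ∫ s, g₀ (s - (a + b)) * g₀ (t - s) ∂μ := by
          congr 1 with s
          rw [show s - b - a = s - (a + b) by abel, show t - (s - b) - b = t - s by abel]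
  have hΦmul : ∀ a b : G, Φ a * Φ b = Φ (a + b) * φ g₀ := by
    intro a b
    have h1 := hconv (fun t => g₀ (t - a)) (fun t => g₀ (t - b)) (hτc a) (hτs a) (hτc b) (hτs b)
    have h2 := hconv (fun t => g₀ (t - (a + b))) g₀ (hτc (a + b)) (hτs (a + b)) hg₀c hg₀s
    rw [hΦdef]
    rw [← h1, ← h2]
    congr 1
    exact convid a b
  have hΦ0 : Φ 0 = φ g₀ := by
    have : (fun t : G => g₀ (t - 0)) = g₀ := by
      funext t; rw [sub_zero]
    simp only [hΦdef, this]
  have hα0 : α 0 = 1 := by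
    rw [hαdef]
    simp only [hΦ0]
    exact div_self hg₀φ
  have hαmul : ∀ a b : G, α (a + b) = α a * α b := by
    intro a b
    rw [hαdef]
    simp only
    rw [div_mul_div_comm, hΦmul a b, eq_div_iff (mul_ne_zero hg₀φ hg₀φ)]
    field_simp
  have hαne : ∀ a : G, α a ≠ 0 := by
    intro a ha
    have h1 : α a * α (-a) = 1 := by rw [← hαmul, add_neg_cancel, hα0]
    rw [ha, zero_mul] at h1
    exact one_ne_zero h1.symm
  -- continuity of Φ
  have hΦcont : Continuous Φ := by
    rw [continuous_iff_continuousAt]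
    intro a₀
    obtain ⟨N, hNc, hNn⟩ := exists_compact_mem_nhds a₀
    have ha₀N : a₀ ∈ N := mem_of_mem_nhds hNn
    set K'' := closure (N + K₀) with hK''def
    have hK''c : IsCompact K'' := (hNc.add hK₀).closure
    obtain ⟨C, hC⟩ := hbound K'' hK''c
    set C' := max C 1 with hC'def
    have hC'pos : (0:ℝ) < C' := lt_of_lt_of_le one_pos (le_max_right _ _)
    rw [ContinuousAt, Metric.tendsto_nhds]
    intro ε hε
    obtain ⟨U, hU, hUc⟩ := aux_uc hg₀c hg₀s (ε / (2 * C')) (by positivity)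
    have hev1 : ∀ᶠ a in nhds a₀, a ∈ N := hNn
    have hev2 : ∀ᶠ a in nhds a₀, a - a₀ ∈ U := by
      have hcont : ContinuousAt (fun a => a - a₀) a₀ := (continuous_sub_right a₀).continuousAt
      have h0 : U ∈ nhds ((fun a => a - a₀) a₀) := by
        simpa [sub_self] using hU
      exact hcont.preimage_mem_nhds h0
    filter_upwards [hev1, hev2] with a haN haU
    set d : G → ℂ := fun t => g₀ (t - a) - g₀ (t - a₀) with hddef
    have hdc : Continuous d := (hτc a).sub (hτc a₀)
    have htr : ∀ b ∈ N, tsupport (fun t => g₀ (t - b)) ⊆ K'' := by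
      intro b hb
      intro t ht
      have h1 := aux_tsupport_translate g₀ b ht
      have h2 : t = b + (t - b) := by abel
      exact subset_closure (h2 ▸ Set.add_mem_add hb h1)
    have hdsupp : tsupport d ⊆ K'' := by
      refine (aux_tsupport_sub _ _).trans ?_
      exact Set.union_subset (htr a haN) (htr a₀ ha₀N)
    have hb := hC d hdc hdsupp
    have hsupnn : (0:ℝ) ≤ ⨆ t : G, ‖d t‖ :=
      Real.iSup_nonneg fun t => norm_nonneg _
    have hsup : (⨆ t : G, ‖d t‖) ≤ ε / (2 * C') := by
      apply ciSup_le
      intro t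
      have h3 := hUc (t - a) (t - a₀)
        (by rw [show t - a₀ - (t - a) = a - a₀ by abel]; exact haU)
      rw [Complex.dist_eq] at h3
      exact le_of_lt h3
    have hφd : φ d = Φ a - Φ a₀ := hφsub _ _ (hτc a) (hτs a) (hτc a₀) (hτs a₀)
    have : dist (Φ a) (Φ a₀) = ‖φ d‖ := by
      rw [hφd, Complex.dist_eq]
    rw [this]
    calc ‖φ d‖ ≤ C * ⨆ t : G, ‖d t‖ := hb
      _ ≤ C' * ⨆ t : G, ‖d t‖ :=
          mul_le_mul_of_nonneg_right (le_max_left _ _) hsupnn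
      _ ≤ C' * (ε / (2 * C')) := mul_le_mul_of_nonneg_left hsup hC'pos.le
      _ = ε / 2 := by field_simp
      _ < ε := by linarith
  have hαcont : Continuous α := hΦcont.div_const _
  refine ⟨α, ⟨hαcont, hαne, hαmul⟩, ?_⟩
  intro f hf hfs
  -- setup
  set K' := closure (tsupport f + K₀) with hK'def
  have hK'c : IsCompact K' := IsCompact.closure (IsCompact.add hfs hK₀)
  have hK'cl : IsClosed K' := isClosed_closure
  obtain ⟨C, hC⟩ := hbound K' hK'c
  obtain ⟨B, hB⟩ := hg₀s.exists_bound_of_continuous hg₀c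
  set g₀b : G →ᵇ ℂ := BoundedContinuousFunction.ofNormedAddCommGroup g₀ hg₀c B hB with hg₀bdef
  set T : G → (G →ᵇ ℂ) :=
    fun a => g₀b.compContinuous ⟨fun t => t - a, continuous_sub_right a⟩ with hTdef
  have hTcoe : ∀ a, ⇑(T a) = fun t => g₀ (t - a) := fun a => rfl
  set E : Submodule ℂ (G →ᵇ ℂ) :=
    { carrier := {h : G →ᵇ ℂ | tsupport ⇑h ⊆ K'}
      add_mem' := by
        intro a b ha hb
        refine subset_trans ?_ (Set.union_subset (ha : tsupport ⇑a ⊆ K') (hb : tsupport ⇑b ⊆ K'))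
        have hco : ⇑(a + b) = fun t => a t + b t := rfl
        rw [hco]
        apply closure_minimal _ ((isClosed_tsupport _).union (isClosed_tsupport _))
        intro t ht
        rw [Function.mem_support] at ht
        by_contra hcon
        rw [Set.mem_union] at hcon
        push_neg at hcon
        rw [image_eq_zero_of_notMem_tsupport hcon.1, image_eq_zero_of_notMem_tsupport hcon.2,
          add_zero] at ht
        exact ht rfl
      zero_mem' := by
        have hco : ⇑(0 : G →ᵇ ℂ) = (fun _ => 0 : G → ℂ) := rfl
        show tsupport ⇑(0 : G →ᵇ ℂ) ⊆ K'
        rw [hco]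
        have : tsupport (fun _ => (0:ℂ) : G → ℂ) = ∅ := by
          simp [tsupport, Function.support]
        rw [this]
        exact Set.empty_subset _
      smul_mem' := by
        intro c h hh
        show tsupport ⇑(c • h) ⊆ K'
        have hco : ⇑(c • h) = c • ⇑h := rfl
        rw [hco]
        exact (closure_mono (Function.support_const_smul_subset c ⇑h)).trans
          (hh : tsupport ⇑h ⊆ K') } with hEdef
  have hEclosed : IsClosed (E : Set (G →ᵇ ℂ)) := by
    have heq : (E : Set (G →ᵇ ℂ)) = ⋂ x ∈ K'ᶜ, {h : G →ᵇ ℂ | h x = 0} := by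
      ext h
      simp only [Set.mem_iInter, Set.mem_setOf_eq, SetLike.mem_coe, Set.mem_compl_iff]
      constructor
      · intro hh x hx
        by_contra h0
        exact hx (hh (subset_tsupport _ h0))
      · intro hh
        apply closure_minimal _ hK'cl
        intro x hx
        by_contra hxK
        rw [Function.mem_support] at hx
        exact hx (hh x hxK)
    rw [heq]
    exact isClosed_biInter fun x _ =>
      isClosed_eq (continuous_eval_const x) continuous_const
  haveI : CompleteSpace ↥E := hEclosed.completeSpace_coe
  have hmemC : ∀ h : ↥E, Continuous ⇑(h : G →ᵇ ℂ) := fun h => (h : G →ᵇ ℂ).continuous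
  have hmemS : ∀ h : ↥E, HasCompactSupport ⇑(h : G →ᵇ ℂ) := fun h =>
    IsCompact.of_isClosed_subset hK'c (isClosed_tsupport _) h.2
  set L₀ : ↥E →ₗ[ℂ] ℂ :=
    { toFun := fun h => φ ⇑(h : G →ᵇ ℂ)
      map_add' := by
        intro a b
        have hcoe : ⇑((a + b : ↥E) : G →ᵇ ℂ) = ⇑(a : G →ᵇ ℂ) + ⇑(b : G →ᵇ ℂ) := rfl
        show φ ⇑((a + b : ↥E) : G →ᵇ ℂ) = φ ⇑(a : G →ᵇ ℂ) + φ ⇑(b : G →ᵇ ℂ)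
        rw [hcoe]
        exact hadd _ _ (hmemC a) (hmemS a) (hmemC b) (hmemS b)
      map_smul' := by
        intro c a
        have hcoe : ⇑((c • a : ↥E) : G →ᵇ ℂ) = c • ⇑(a : G →ᵇ ℂ) := rfl
        show φ ⇑((c • a : ↥E) : G →ᵇ ℂ) = c * φ ⇑(a : G →ᵇ ℂ)
        rw [hcoe]
        exact hsmul c _ (hmemC a) (hmemS a) } with hL₀def
  have hL₀bound : ∀ h : ↥E, ‖L₀ h‖ ≤ (max C 0) * ‖h‖ := by
    intro h
    have h1 := hC ⇑(h : G →ᵇ ℂ) (hmemC h) h.2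
    have h2 : (⨆ t : G, ‖(h : G →ᵇ ℂ) t‖) = ‖(h : G →ᵇ ℂ)‖ := by
      exact (BoundedContinuousFunction.norm_eq_iSup_norm _).symm
    have h3 : ‖L₀ h‖ = ‖φ ⇑(h : G →ᵇ ℂ)‖ := rfl
    have h4 : ‖h‖ = ‖(h : G →ᵇ ℂ)‖ := rfl
    rw [h3, h4]
    calc ‖φ ⇑(h : G →ᵇ ℂ)‖ ≤ C * ⨆ t : G, ‖(h : G →ᵇ ℂ) t‖ := h1
      _ ≤ (max C 0) * ⨆ t : G, ‖(h : G →ᵇ ℂ) t‖ := by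
          apply mul_le_mul_of_nonneg_right (le_max_left _ _)
          exact Real.iSup_nonneg fun t => norm_nonneg _
      _ = (max C 0) * ‖(h : G →ᵇ ℂ)‖ := by rw [h2]
  set L : ↥E →L[ℂ] ℂ := L₀.mkContinuous (max C 0) hL₀bound with hLdef
  -- continuity of translation into BCF
  have hTcont : Continuous T := by
    rw [continuous_iff_continuousAt]
    intro a₀
    rw [ContinuousAt, Metric.tendsto_nhds]
    intro ε hε
    obtain ⟨U, hU, hUc⟩ := aux_uc hg₀c hg₀s (ε/2) (by positivity)
    have hev : ∀ᶠ a in nhds a₀, a - a₀ ∈ U := by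
      have hcont : ContinuousAt (fun a => a - a₀) a₀ := (continuous_sub_right a₀).continuousAt
      have h0 : U ∈ nhds ((fun a => a - a₀) a₀) := by simpa [sub_self] using hU
      exact hcont.preimage_mem_nhds h0
    filter_upwards [hev] with a haU
    have hd2 : dist (T a) (T a₀) ≤ ε/2 := by
      rw [BoundedContinuousFunction.dist_le (by positivity)]
      intro t
      have h3 := hUc (t - a) (t - a₀)
        (by rw [show t - a₀ - (t - a) = a - a₀ by abel]; exact haU)
      exact h3.le
    linarith [hd2]
  have hFmem : ∀ s, (f s • T s) ∈ E := by
    intro s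
    by_cases hfs0 : f s = 0
    · rw [hfs0, zero_smul]
      exact E.zero_mem
    · show tsupport ⇑(f s • T s) ⊆ K'
      have hsK : s ∈ tsupport f := subset_tsupport f hfs0
      have hcoe : ⇑(f s • T s) = fun t => f s * g₀ (t - s) := rfl
      rw [hcoe]
      intro t ht
      have h1 : tsupport (fun t => f s * g₀ (t - s)) ⊆ tsupport (fun t => g₀ (t - s)) :=
        closure_mono (Function.support_mul_subset_right _ _)
      have h2 := aux_tsupport_translate g₀ s (h1 ht)
      have h3 : t = s + (t - s) := by abel
      exact subset_closure (h3 ▸ Set.add_mem_add hsK h2)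
  set F : G → ↥E := fun s => ⟨f s • T s, hFmem s⟩ with hFdef
  have hFc : Continuous F := Continuous.subtype_mk (hf.smul hTcont) _
  have hFs : HasCompactSupport F := by
    apply HasCompactSupport.intro hfs
    intro s hs
    have h0 : f s = 0 := image_eq_zero_of_notMem_tsupport hs
    apply Subtype.ext
    show f s • T s = 0
    rw [h0, zero_smul]
  have hFi : Integrable F μ := hFc.integrable_of_hasCompactSupport hFs
  set I : ↥E := ∫ s, F s ∂μ with hIdef
  have key1 : ∀ t, ((I : G →ᵇ ℂ) t) = ∫ s, f s * g₀ (t - s) ∂μ := by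
    intro t
    set e : ↥E →L[ℂ] ℂ :=
      (BoundedContinuousFunction.evalCLM (𝕜 := ℂ) t).comp E.subtypeL with hedef
    have h1 := e.integral_comp_comm hFi
    have h2 : ∀ s, e (F s) = f s * g₀ (t - s) := fun s => rfl
    calc ((I : G →ᵇ ℂ) t) = e I := rfl
      _ = ∫ s, e (F s) ∂μ := h1.symm
      _ = ∫ s, f s * g₀ (t - s) ∂μ := by simp only [h2]
  have key2 : φ (fun t => ∫ s, f s * g₀ (t - s) ∂μ) = ∫ s, f s * Φ s ∂μ := by
    have hfn : (fun t => ∫ s, f s * g₀ (t - s) ∂μ) = ⇑(I : G →ᵇ ℂ) := by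
      funext t
      exact (key1 t).symm
    rw [hfn]
    have h1 := L.integral_comp_comm hFi
    have h2 : ∀ s, L (F s) = f s * Φ s := by
      intro s
      have hL1 : L (F s) = φ ⇑((F s : ↥E) : G →ᵇ ℂ) := rfl
      rw [hL1]
      have hcoe : ⇑((F s : ↥E) : G →ᵇ ℂ) = (f s) • (fun t => g₀ (t - s)) := rfl
      rw [hcoe, hsmul (f s) _ (hτc s) (hτs s)]
    have h3 : φ ⇑(I : G →ᵇ ℂ) = L I := rfl
    rw [h3, ← h1]
    simp only [h2]
  have hfin : φ g₀ * φ f = φ g₀ * ∫ s, f s * α s ∂μ := by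
    have hc := hconv f g₀ hf hfs hg₀c hg₀s
    have hΦα : ∀ s, f s * Φ s = φ g₀ * (f s * α s) := by
      intro s
      have : Φ s = φ g₀ * α s := by
        rw [hαdef]
        field_simp
      rw [this]
      ring
    calc φ g₀ * φ f = φ f * φ g₀ := by ring
      _ = φ (fun t => ∫ s, f s * g₀ (t - s) ∂μ) := hc.symm
      _ = ∫ s, f s * Φ s ∂μ := key2
      _ = ∫ s, φ g₀ * (f s * α s) ∂μ := by simp only [hΦα]
      _ = φ g₀ * ∫ s, f s * α s ∂μ := integral_const_mul _ _
  exact mul_left_cancel₀ hg₀φ hfin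

end Aux

theorem stmt_17 {G : Type*} [AddCommGroup G] [TopologicalSpace G] [IsTopologicalAddGroup G]
    [LocallyCompactSpace G] [SecondCountableTopology G] [MeasurableSpace G] [BorelSpace G]
    (μ : Measure G) [μ.IsAddHaarMeasure] :
    (∀ α : G → ℂ, IsGenChar α →
        IsGelfandFunctional μ (fun f => ∫ s, f s * α s ∂μ)) ∧
    (∀ α β : G → ℂ, IsGenChar α → IsGenChar β →
        (fun f : G → ℂ => ∫ s, f s * α s ∂μ) = (fun f => ∫ s, f s * β s ∂μ) → α = β) ∧
    (∀ φ : (G → ℂ) → ℂ, IsGelfandFunctional μ φ → ∃ α : G → ℂ, IsGenChar α ∧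
        ∀ f : G → ℂ, Continuous f → HasCompactSupport f → φ f = ∫ s, f s * α s ∂μ) := by
  refine ⟨fun α hα => ?_, fun α β hα hβ hEq => aux_inj μ hα.1 hβ.1 hEq, fun φ hφ => ?_⟩
  · obtain ⟨hαc, hα0, hαm⟩ := hα
    refine ⟨?_, ?_, ?_, aux_nonzero μ hαc hα0 hαm, fun K hK => aux_bound μ hαc K hK⟩
    · intro f g hf hfs hg hgs
      calc ∫ s, (f + g) s * α s ∂μ = ∫ s, (f s * α s + g s * α s) ∂μ := by
            congr 1 with s
            simp [add_mul]
        _ = (∫ s, f s * α s ∂μ) + ∫ s, g s * α s ∂μ :=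
            integral_add ((hf.mul hαc).integrable_of_hasCompactSupport hfs.mul_right)
              ((hg.mul hαc).integrable_of_hasCompactSupport hgs.mul_right)
    · intro c f hf hfs
      calc ∫ s, (c • f) s * α s ∂μ = ∫ s, c * (f s * α s) ∂μ := by
            congr 1 with s
            simp [mul_assoc]
        _ = c * ∫ s, f s * α s ∂μ := integral_const_mul _ _
    · exact fun f g hf hfs hg hgs => aux_conv_char μ hf hfs hg hgs hαc hαm
  · obtain ⟨hadd, hsmul, hconv, hne, hbound⟩ := hφ
    obtain ⟨α, hα, hrep⟩ := aux_surj μ hadd hsmul hconv hne hbound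
    exact ⟨α, hα, hrep⟩
end

section
/- Let G be a discrete abelian group. Then the map α ↦ φ_α, where φ_α(f) = Σ_{s ∈ G} f(s) α(s), is a homeomorphism from H(G) (homomorphisms G → ℂ* with the topology of pointwise convergence) onto the Gel'fand space of the convolution algebra C_c(G) of finitely supported complex functions on G, with its Gel'fand (weak-*) topology. -/
/-- The set of generalized characters on a discrete abelian group `G`, i.e.
homomorphisms `G → ℂ*`, topologized by pointwise convergence (which agrees with
the compact-open topology since `G` is discrete). -/
def GenCharSpace (G : Type*) [AddCommGroup G] : Type _ :=
  {α : G → ℂ // (∀ x, α x ≠ 0) ∧ α 0 = 1 ∧ ∀ s t, α (s + t) = α s * α t}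

noncomputable instance (G : Type*) [AddCommGroup G] : TopologicalSpace (GenCharSpace G) :=
  instTopologicalSpaceSubtype

/-- The Gel'fand space of the convolution algebra of finitely supported complex
functions on `G` (realized as `AddMonoidAlgebra ℂ G`, whose product is convolution):
nonzero multiplicative linear functionals, with the topology of pointwise (weak-*)
convergence. -/
def GelfandSpace (G : Type*) [AddCommGroup G] : Type _ :=
  {φ : AddMonoidAlgebra ℂ G → ℂ //
    (∀ f g, φ (f * g) = φ f * φ g) ∧ (∀ f g, φ (f + g) = φ f + φ g) ∧
    (∀ (c : ℂ) f, φ (c • f) = c * φ f) ∧ φ ≠ 0}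

noncomputable instance (G : Type*) [AddCommGroup G] : TopologicalSpace (GelfandSpace G) :=
  instTopologicalSpaceSubtype

section aux
variable {G : Type*} [AddCommGroup G]

noncomputable def charAlgHom (α : G → ℂ) (h0 : α 0 = 1)
    (hadd : ∀ s t, α (s + t) = α s * α t) : AddMonoidAlgebra ℂ G →ₐ[ℂ] ℂ :=
  AddMonoidAlgebra.lift ℂ ℂ G
    { toFun := fun s => α (Multiplicative.toAdd s)
      map_one' := h0
      map_mul' := fun s t => hadd _ _ }

lemma charAlgHom_apply (α : G → ℂ) (h0 : α 0 = 1)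
    (hadd : ∀ s t, α (s + t) = α s * α t) (f : AddMonoidAlgebra ℂ G) :
    charAlgHom α h0 hadd f = f.coeff.sum fun s c => c * α s := by
  simp [charAlgHom, AddMonoidAlgebra.lift_apply, smul_eq_mul]

lemma phi_one (φ : AddMonoidAlgebra ℂ G → ℂ)
    (hmul : ∀ f g, φ (f * g) = φ f * φ g) (hne : φ ≠ 0) : φ 1 = 1 := by
  have h : φ 1 = φ 1 * φ 1 := by simpa using hmul 1 1
  by_cases h1 : φ 1 = 0
  · exact absurd (funext fun f => by
      have := hmul f 1
      simp [h1] at this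
      simpa [Pi.zero_apply] using this) hne
  · exact (mul_left_cancel₀ h1 (by rw [← h, mul_one])).symm

lemma phi_eq (φ : AddMonoidAlgebra ℂ G → ℂ)
    (haddφ : ∀ f g, φ (f + g) = φ f + φ g)
    (hsmul : ∀ (c : ℂ) f, φ (c • f) = c * φ f) (f : AddMonoidAlgebra ℂ G) :
    φ f = f.coeff.sum fun s c => c * φ (AddMonoidAlgebra.single s 1) := by
  classical
  let ψ : AddMonoidAlgebra ℂ G →+ ℂ := AddMonoidHom.mk' φ haddφ
  have hψ : ∀ x, ψ x = φ x := fun _ => rfl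
  calc φ f = ψ (f.coeff.sum fun s c => AddMonoidAlgebra.single s c) := by
            rw [AddMonoidAlgebra.sum_coeff_single f]; rfl
    _ = f.coeff.sum fun s c => ψ (AddMonoidAlgebra.single s c) := map_finsuppSum ψ _ _
    _ = f.coeff.sum fun s c => c * φ (AddMonoidAlgebra.single s 1) := by
        refine Finsupp.sum_congr fun s _ => ?_
        rw [hψ, show AddMonoidAlgebra.single s (f.coeff s) = (f.coeff s) • AddMonoidAlgebra.single s 1 by
          rw [AddMonoidAlgebra.smul_single', mul_one], hsmul]

end aux

theorem stmt_19 (G : Type*) [AddCommGroup G] :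
    ∃ e : GenCharSpace G ≃ₜ GelfandSpace G,
      ∀ (α : GenCharSpace G) (f : AddMonoidAlgebra ℂ G),
        (e α).1 f = f.coeff.sum fun s c => c * α.1 s := by
  classical
  refine ⟨{
    toFun := fun α => ⟨fun f => f.coeff.sum fun s c => c * α.1 s, ?_, ?_, ?_, ?_⟩
    invFun := fun φ => ⟨fun s => φ.1 (AddMonoidAlgebra.single s 1), ?_, ?_, ?_⟩
    left_inv := ?_
    right_inv := ?_
    continuous_toFun := ?_
    continuous_invFun := ?_ }, fun α f => rfl⟩
  · intro f g
    simp only [← charAlgHom_apply α.1 α.2.2.1 α.2.2.2]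
    exact map_mul _ f g
  · intro f g
    simp only [← charAlgHom_apply α.1 α.2.2.1 α.2.2.2]
    exact map_add _ f g
  · intro c f
    simp only [← charAlgHom_apply α.1 α.2.2.1 α.2.2.2]
    rw [map_smul, smul_eq_mul]
  · intro h
    have := congrFun h 1
    rw [← charAlgHom_apply α.1 α.2.2.1 α.2.2.2, map_one] at this
    simpa using this
  · -- nonzero values
    obtain ⟨φ, hmul, haddφ, hsmul, hne⟩ := φ
    intro s h
    have h' : φ (AddMonoidAlgebra.single s 1) = 0 := h
    have h1 : φ 1 = 1 := phi_one φ hmul hne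
    have : φ (AddMonoidAlgebra.single s 1 * AddMonoidAlgebra.single (-s) 1) = 0 := by
      rw [hmul, h', zero_mul]
    rw [AddMonoidAlgebra.single_mul_single, add_neg_cancel, one_mul,
      ← AddMonoidAlgebra.one_def, h1] at this
    exact one_ne_zero this
  · obtain ⟨φ, hmul, haddφ, hsmul, hne⟩ := φ
    simpa [← AddMonoidAlgebra.one_def] using phi_one φ hmul hne
  · obtain ⟨φ, hmul, haddφ, hsmul, hne⟩ := φ
    intro s t
    rw [← hmul, AddMonoidAlgebra.single_mul_single, one_mul]
  · intro α
    apply Subtype.ext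
    funext s
    simp only
    rw [AddMonoidAlgebra.coeff_single, Finsupp.sum_single_index (by simp), one_mul]
  · intro φ
    apply Subtype.ext
    funext f
    exact (phi_eq φ.1 φ.2.2.1 φ.2.2.2.1 f).symm
  · apply Continuous.subtype_mk
    apply continuous_pi
    intro f
    simp only [Finsupp.sum]
    exact continuous_finset_sum _ fun s _ =>
      continuous_const.mul ((continuous_apply s).comp continuous_subtype_val)
  · apply Continuous.subtype_mk
    apply continuous_pi
    intro s
    exact (continuous_apply _).comp continuous_subtype_val
end
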